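/- arXiv:math/0410046 — 6 statements merged into one kernel-verified Lean document; each statement's English description precedes it below -/
import Mathlib

section
/- Division theorem (commutative case of Théorème 3.1). Let P_1,…,P_r be nonzero elements of R_k and let ℕ^{n+q} = Δ_1 ∪ ⋯ ∪ Δ_r ∪ Δ̄ be the partition associated with exp_≺(P_1),…,exp_≺(P_r). Then for every P ∈ R_k there exists a unique tuple (Q_1,…,Q_r,R) of elements of R_k such that: P = Σ_{j=1}^r Q_j P_j + R; for every j, either Q_j = 0 or DN(Q_j) + exp_≺(P_j) ⊆ Δ_j; and either R = 0 or DN(R) ⊆ Δ̄. -/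
/-
Division theorem (commutative case of Théorème 3.1) in R_k = k[[x]][z].
-/

open Classical

noncomputable section

/-- Exponents in ℕ^{n+q}, written as pairs (α, β) ∈ ℕ^n × ℕ^q. -/
abbrev Expo (n q : ℕ) := (Fin n →₀ ℕ) × (Fin q →₀ ℕ)

/-- The ring R_A = A[[x]][z], polynomials in z = (z_1,…,z_q) over A[[x]]. -/
abbrev Rxz (n q : ℕ) (A : Type) [CommRing A] :=
  MvPolynomial (Fin q) (MvPowerSeries (Fin n) A)

/-- Coefficient c_{α,β} of `P` at the pair exponent `d = (α, β)`. -/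
def coeffOf {n q : ℕ} {A : Type} [CommRing A] (P : Rxz n q A) (d : Expo n q) : A :=
  MvPowerSeries.coeff d.1 (MvPolynomial.coeff d.2 P)

/-- Newton diagram DN(P). -/
def newtonDiag {n q : ℕ} {A : Type} [CommRing A] (P : Rxz n q A) : Set (Expo n q) :=
  {d | coeffOf P d ≠ 0}

/-- The linear form L(β) = Σ l_i β_i. -/
def Lform {q : ℕ} (l : Fin q → ℕ) (β : Fin q →₀ ℕ) : ℕ := ∑ i, l i * β i

/-- Total degree |β| of a finitely supported exponent. -/
def degSum {σ : Type} [Fintype σ] (β : σ →₀ ℕ) : ℕ := ∑ i, β i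

/-- The order ≺_L built from the linear form given by `l` and the tie-breaking
monomial order `lt0` (where `lt0 d' d` means `d >₀ d'`). -/
def PrecL {n q : ℕ} (l : Fin q → ℕ) (lt0 : Expo n q → Expo n q → Prop)
    (d d' : Expo n q) : Prop :=
  Lform l d.2 < Lform l d'.2 ∨
    (Lform l d.2 = Lform l d'.2 ∧
      (degSum d.2 < degSum d'.2 ∨
        (degSum d.2 = degSum d'.2 ∧
          (degSum d'.1 < degSum d.1 ∨
            (degSum d.1 = degSum d'.1 ∧ lt0 d' d)))))

/-- `e` is the privileged exponent exp_≺(P): the `prec`-maximum of the Newton diagram of `P`. -/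
def IsPrivExp {n q : ℕ} {A : Type} [CommRing A] (prec : Expo n q → Expo n q → Prop)
    (P : Rxz n q A) (e : Expo n q) : Prop :=
  coeffOf P e ≠ 0 ∧ ∀ d, coeffOf P d ≠ 0 → d = e ∨ prec d e

/-- `v ∈ e + ℕ^{n+q}`. -/
def inShift {n q : ℕ} (e v : Expo n q) : Prop := ∃ γ : Expo n q, v = e + γ

/-- The region Δ_j of the partition of ℕ^{n+q} associated to the exponents e_1,…,e_r:
Δ_j = (e_j + ℕ^{n+q}) \ (Δ_1 ∪ ⋯ ∪ Δ_{j-1}). -/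
def DeltaJ {n q r : ℕ} (e : Fin r → Expo n q) (j : Fin r) : Set (Expo n q) :=
  {v | inShift (e j) v ∧ ∀ k, k < j → ¬ inShift (e k) v}

/-- The residual region Δ̄ (complement of the union of the Δ_j). -/
def DeltaBar {n q r : ℕ} (e : Fin r → Expo n q) : Set (Expo n q) :=
  {v | ∀ j, ¬ inShift (e j) v}

namespace Div

variable {n q : ℕ}

def pairsOf (v : Expo n q) : Finset (Expo n q × Expo n q) :=
  ((Finset.HasAntidiagonal.antidiagonal v.1) ×ˢ (Finset.HasAntidiagonal.antidiagonal v.2)).map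
    ⟨fun x => ((x.1.1, x.2.1), (x.1.2, x.2.2)), by
      rintro ⟨⟨a,b⟩,⟨c,d⟩⟩ ⟨⟨a',b'⟩,⟨c',d'⟩⟩ h
      simp only [Prod.mk.injEq] at h ⊢
      tauto⟩

lemma mem_pairsOf {v : Expo n q} {p : Expo n q × Expo n q} :
    p ∈ pairsOf v ↔ p.1 + p.2 = v := by
  obtain ⟨⟨a,b⟩,⟨c,d⟩⟩ := p
  obtain ⟨v1, v2⟩ := v
  simp only [pairsOf, Finset.mem_map, Finset.mem_product, Function.Embedding.coeFn_mk,
    Finset.HasAntidiagonal.mem_antidiagonal, Prod.mk.injEq, Prod.ext_iff]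
  constructor
  · rintro ⟨⟨x,y⟩, ⟨h1, h2⟩, h⟩
    obtain ⟨⟨rfl, rfl⟩, rfl, rfl⟩ := h
    exact ⟨h1, h2⟩
  · rintro ⟨h1, h2⟩
    exact ⟨((a,c),(b,d)), ⟨h1, h2⟩, ⟨⟨rfl, rfl⟩, rfl, rfl⟩⟩

variable {k : Type} [Field k]

lemma coeffOf_mul (A B : Rxz n q k) (v : Expo n q) :
    coeffOf (A * B) v = ∑ p ∈ pairsOf v, coeffOf A p.1 * coeffOf B p.2 := by
  obtain ⟨v1, v2⟩ := v
  simp only [coeffOf, MvPolynomial.coeff_mul, map_sum, MvPowerSeries.coeff_mul, pairsOf,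
    Finset.sum_map, Function.Embedding.coeFn_mk, Finset.sum_product, Finset.mul_sum]
  rw [Finset.sum_comm]
  rfl

lemma coeffOf_add (A B : Rxz n q k) (v : Expo n q) :
    coeffOf (A + B) v = coeffOf A v + coeffOf B v := by
  simp [coeffOf, MvPolynomial.coeff_add]

lemma coeffOf_sum {ι : Type*} (s : Finset ι) (f : ι → Rxz n q k) (v : Expo n q) :
    coeffOf (∑ i ∈ s, f i) v = ∑ i ∈ s, coeffOf (f i) v := by
  simp only [coeffOf, MvPolynomial.coeff_sum, map_sum]

lemma coeffOf_zero (v : Expo n q) : coeffOf (0 : Rxz n q k) v = 0 := by simp [coeffOf]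

lemma rxz_ext {A B : Rxz n q k} (h : ∀ v, coeffOf A v = coeffOf B v) : A = B := by
  apply MvPolynomial.ext
  intro m
  apply MvPowerSeries.ext
  intro a
  exact h (a, m)


variable {n q : ℕ} {l : Fin q → ℕ} {lt0 : Expo n q → Expo n q → Prop}

lemma Lform_add (β γ : Fin q →₀ ℕ) : Lform l (β + γ) = Lform l β + Lform l γ := by
  simp [Lform, Finsupp.add_apply, mul_add, Finset.sum_add_distrib]

lemma degSum_add {σ : Type} [Fintype σ] (β γ : σ →₀ ℕ) : degSum (β + γ) = degSum β + degSum γ := by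
  simp [degSum, Finsupp.add_apply, Finset.sum_add_distrib]

section
variable (htri : ∀ a b : Expo n q, lt0 a b ∨ a = b ∨ lt0 b a)
  (htrans : ∀ a b c : Expo n q, lt0 a b → lt0 b c → lt0 a c)
  (hwf : WellFounded lt0)
  (hadd : ∀ a b c : Expo n q, lt0 a b → lt0 (a + c) (b + c))

include hwf in
lemma lt0_irrefl (a : Expo n q) : ¬ lt0 a a := by
  intro h
  exact (WellFounded.isIrrefl hwf).1 a h

include hwf in
lemma prec_irrefl (a : Expo n q) : ¬ PrecL l lt0 a a := by
  intro h
  rcases h with h | ⟨_, h | ⟨_, h | ⟨_, h⟩⟩⟩ <;> first | omega | exact lt0_irrefl hwf a h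

include htrans in
lemma prec_trans {a b c : Expo n q} (h1 : PrecL l lt0 a b) (h2 : PrecL l lt0 b c) :
    PrecL l lt0 a c := by
  unfold PrecL at *
  rcases h1 with h1 | ⟨e1, h1 | ⟨f1, h1 | ⟨g1, h1⟩⟩⟩ <;>
    rcases h2 with h2 | ⟨e2, h2 | ⟨f2, h2 | ⟨g2, h2⟩⟩⟩ <;>
    first
      | (left; omega)
      | (right; exact ⟨by omega, Or.inl (by omega)⟩)
      | (right; exact ⟨by omega, Or.inr ⟨by omega, Or.inl (by omega)⟩⟩)
      | (right; exact ⟨by omega, Or.inr ⟨by omega, Or.inr ⟨by omega, htrans _ _ _ h2 h1⟩⟩⟩)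

include htri in
lemma prec_trichot (a b : Expo n q) : PrecL l lt0 a b ∨ a = b ∨ PrecL l lt0 b a := by
  unfold PrecL
  rcases Nat.lt_trichotomy (Lform l a.2) (Lform l b.2) with h | h | h
  · exact Or.inl (Or.inl h)
  · rcases Nat.lt_trichotomy (degSum a.2) (degSum b.2) with h2 | h2 | h2
    · exact Or.inl (Or.inr ⟨h, Or.inl h2⟩)
    · rcases Nat.lt_trichotomy (degSum a.1) (degSum b.1) with h3 | h3 | h3
      · exact Or.inr (Or.inr (Or.inr ⟨h.symm, Or.inr ⟨h2.symm, Or.inl h3⟩⟩))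
      · rcases htri a b with h4 | h4 | h4
        · exact Or.inr (Or.inr (Or.inr ⟨h.symm, Or.inr ⟨h2.symm, Or.inr ⟨h3.symm, h4⟩⟩⟩))
        · exact Or.inr (Or.inl h4)
        · exact Or.inl (Or.inr ⟨h, Or.inr ⟨h2, Or.inr ⟨h3, h4⟩⟩⟩)
      · exact Or.inl (Or.inr ⟨h, Or.inr ⟨h2, Or.inl h3⟩⟩)
    · exact Or.inr (Or.inr (Or.inr ⟨h.symm, Or.inl h2⟩))
  · exact Or.inr (Or.inr (Or.inl h))
  
include hadd in
lemma prec_add {a b : Expo n q} (c : Expo n q) (h : PrecL l lt0 a b) :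
    PrecL l lt0 (a + c) (b + c) := by
  have ha2 : (a + c).2 = a.2 + c.2 := rfl
  have hb2 : (b + c).2 = b.2 + c.2 := rfl
  have ha1 : (a + c).1 = a.1 + c.1 := rfl
  have hb1 : (b + c).1 = b.1 + c.1 := rfl
  unfold PrecL at *
  rw [ha2, hb2, ha1, hb1, Lform_add, Lform_add, degSum_add, degSum_add, degSum_add, degSum_add]
  rcases h with h | ⟨e, h | ⟨f, h | ⟨g, h⟩⟩⟩
  · left; omega
  · right; exact ⟨by omega, Or.inl (by omega)⟩
  · right; exact ⟨by omega, Or.inr ⟨by omega, Or.inl (by omega)⟩⟩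
  · right; exact ⟨by omega, Or.inr ⟨by omega, Or.inr ⟨by omega, hadd _ _ _ h⟩⟩⟩

include hwf htrans in
lemma prec_asymm {a b : Expo n q} (h : PrecL l lt0 a b) : ¬ PrecL l lt0 b a :=
  fun h2 => prec_irrefl hwf a (prec_trans htrans h h2)

include hwf in
lemma prec_ne {a b : Expo n q} (h : PrecL l lt0 a b) : a ≠ b := by
  rintro rfl; exact prec_irrefl hwf a h

include htri htrans in
lemma exists_prec_max (s : Finset (Expo n q)) (hs : s.Nonempty) :
    ∃ m ∈ s, ∀ x ∈ s, x = m ∨ PrecL l lt0 x m := by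
  classical
  induction s using Finset.induction_on with
  | empty => exact absurd hs (by simp)
  | @insert a s ha ih =>
    rcases s.eq_empty_or_nonempty with rfl | hs'
    · exact ⟨a, by simp, by simp⟩
    · obtain ⟨m, hm, hmax⟩ := ih hs'
      rcases prec_trichot htri a m with h | h | h
      · refine ⟨m, Finset.mem_insert_of_mem hm, ?_⟩
        intro x hx
        rcases Finset.mem_insert.1 hx with rfl | hx
        · exact Or.inr h
        · exact hmax x hx
      · exact ⟨m, Finset.mem_insert_of_mem hm, fun x hx => by
          rcases Finset.mem_insert.1 hx with rfl | hx
          · exact Or.inl h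
          · exact hmax x hx⟩
      · refine ⟨a, Finset.mem_insert_self a s, ?_⟩
        intro x hx
        rcases Finset.mem_insert.1 hx with rfl | hx
        · exact Or.inl rfl
        · rcases hmax x hx with rfl | hx2
          · exact Or.inr h
          · exact Or.inr (prec_trans htrans hx2 h)

include hadd in
lemma prec_add_left {a b : Expo n q} (c : Expo n q) (h : PrecL l lt0 a b) :
    PrecL l lt0 (c + a) (c + b) := by
  rw [add_comm c a, add_comm c b]; exact prec_add hadd c h

include hadd htrans in
lemma prec_add_le {a a' b b' : Expo n q} (h1 : a = a' ∨ PrecL l lt0 a a')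
    (h2 : b = b' ∨ PrecL l lt0 b b') :
    a + b = a' + b' ∨ PrecL l lt0 (a + b) (a' + b') := by
  rcases h1 with rfl | h1 <;> rcases h2 with rfl | h2
  · exact Or.inl rfl
  · exact Or.inr (prec_add_left hadd a h2)
  · exact Or.inr (prec_add hadd b h1)
  · exact Or.inr (prec_trans htrans (prec_add hadd b h1) (prec_add_left hadd a' h2))

include hwf in
lemma rel_wf (B : ℕ) :
    WellFounded (fun w v : Expo n q => PrecL l lt0 v w ∧ degSum w.2 ≤ B) := by
  classical
  set M := Finset.univ.sup l with hM
  have hL : ∀ β : Fin q →₀ ℕ, degSum β ≤ B → Lform l β ≤ M * B := by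
    intro β hβ
    calc Lform l β ≤ ∑ i, M * β i :=
          Finset.sum_le_sum (fun i _ =>
            Nat.mul_le_mul_right _ (Finset.le_sup (Finset.mem_univ i)))
      _ = M * degSum β := by rw [degSum, Finset.mul_sum]
      _ ≤ M * B := Nat.mul_le_mul_left _ hβ
  have wf4 : WellFounded (Prod.Lex (α := ℕ) (· < ·)
      (Prod.Lex (α := ℕ) (· < ·) (Prod.Lex (α := ℕ) (· < ·) lt0))) :=
    (Nat.lt_wfRel.wf).prod_lex ((Nat.lt_wfRel.wf).prod_lex ((Nat.lt_wfRel.wf).prod_lex hwf))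
  have := InvImage.wf
    (fun v : Expo n q => (M * B - Lform l v.2, (B - degSum v.2, (degSum v.1, v)))) wf4
  apply Subrelation.wf (r := InvImage (Prod.Lex (α := ℕ) (· < ·)
      (Prod.Lex (α := ℕ) (· < ·) (Prod.Lex (α := ℕ) (· < ·) lt0)))
      (fun v : Expo n q => (M * B - Lform l v.2, (B - degSum v.2, (degSum v.1, v))))) ?_ this
  intro w v hwv
  obtain ⟨hp, hB⟩ := hwv
  have hw : Lform l w.2 ≤ M * B := hL _ hB
  unfold InvImage
  rcases hp with h | ⟨e1, h | ⟨e2, h | ⟨e3, h⟩⟩⟩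
  · exact Prod.Lex.left _ _ (by omega)
  · rw [Prod.lex_def]
    right
    refine ⟨by simp [e1], ?_⟩
    exact Prod.Lex.left _ _ (by omega)
  · rw [Prod.lex_def]
    refine Or.inr ⟨by simp [e1], ?_⟩
    rw [Prod.lex_def]
    refine Or.inr ⟨by simp [e2], ?_⟩
    exact Prod.Lex.left _ _ (by omega)
  · rw [Prod.lex_def]
    refine Or.inr ⟨by simp [e1], ?_⟩
    rw [Prod.lex_def]
    refine Or.inr ⟨by simp [e2], ?_⟩
    rw [Prod.lex_def]
    exact Or.inr ⟨by simp [e3], h⟩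

lemma component_le_degSum {σ : Type} [Fintype σ] (β : σ →₀ ℕ) (i : σ) : β i ≤ degSum β :=
  Finset.single_le_sum (fun _ _ => Nat.zero_le _) (Finset.mem_univ i)

lemma keylex {Big a b a' b' : ℕ} (hb' : b' ≤ Big)
    (h : a * (Big + 1) + b ≤ a' * (Big + 1) + b') :
    a < a' ∨ (a = a' ∧ b ≤ b') := by
  rcases Nat.lt_trichotomy a a' with h1 | h1 | h1
  · exact Or.inl h1
  · subst h1; exact Or.inr ⟨rfl, by omega⟩
  · exfalso
    have h2 : a' + 1 ≤ a := h1
    have h3 : (a' + 1) * (Big + 1) ≤ a * (Big + 1) := Nat.mul_le_mul_right _ h2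
    have h4 : (a' + 1) * (Big + 1) = a' * (Big + 1) + (Big + 1) := by ring
    omega

variable {k : Type} [Field k]

lemma coeffOf_ne_zero_mem_support {G : Rxz n q k} {d : Expo n q} (h : coeffOf G d ≠ 0) :
    d.2 ∈ G.support := by
  rw [MvPolynomial.mem_support_iff]
  intro h0
  exact h (by simp [coeffOf, h0])

include htri htrans in
lemma exists_privExp (G : Rxz n q k) (hG : G ≠ 0) :
    ∃ g, IsPrivExp (PrecL l lt0) G g := by
  classical
  have hsupp : G.support.Nonempty := MvPolynomial.support_nonempty.2 hG
  set Big := G.support.sup degSum with hBig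
  set N : (Fin q →₀ ℕ) → ℕ := fun β => Lform l β * (Big + 1) + degSum β with hN
  set M := G.support.sup N with hMdef
  have hNle : ∀ β ∈ G.support, N β ≤ M := fun β hβ => Finset.le_sup hβ
  obtain ⟨β₀, hβ₀s, hβ₀⟩ := Finset.exists_mem_eq_sup _ hsupp N
  have hpred : ∃ m, ∃ d : Expo n q, coeffOf G d ≠ 0 ∧ N d.2 = M ∧ degSum d.1 = m := by
    have hc : MvPolynomial.coeff β₀ G ≠ 0 := MvPolynomial.mem_support_iff.1 hβ₀s
    have : ∃ α, MvPowerSeries.coeff α (MvPolynomial.coeff β₀ G) ≠ 0 := by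
      by_contra hall
      push_neg at hall
      exact hc (MvPowerSeries.ext (fun α => by simp [hall α]))
    obtain ⟨α, hα⟩ := this
    exact ⟨degSum α, (α, β₀), hα, hβ₀.symm, rfl⟩
  set m := Nat.find hpred with hm
  obtain ⟨d₀, hd₀c, hd₀N, hd₀m⟩ := Nat.find_spec hpred
  set cα : Fin n →₀ ℕ := Finsupp.equivFunOnFinite.symm (fun _ : Fin n => m) with hcα
  set Dmf : Finset (Expo n q) := ((Finset.Iic cα) ×ˢ G.support).filter
      (fun d => coeffOf G d ≠ 0 ∧ N d.2 = M ∧ degSum d.1 = m) with hDmf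
  have hmemD : ∀ d : Expo n q, coeffOf G d ≠ 0 → N d.2 = M → degSum d.1 = m → d ∈ Dmf := by
    intro d h1 h2 h3
    rw [hDmf, Finset.mem_filter, Finset.mem_product]
    refine ⟨⟨Finset.mem_Iic.2 ?_, coeffOf_ne_zero_mem_support h1⟩, h1, h2, h3⟩
    rw [Finsupp.le_def]
    intro i
    have := component_le_degSum d.1 i
    simp only [hcα, Finsupp.coe_equivFunOnFinite_symm]
    omega
  have hDne : Dmf.Nonempty := ⟨d₀, hmemD d₀ hd₀c hd₀N hd₀m⟩
  obtain ⟨g, hgD, hgmax⟩ := exists_prec_max htri htrans Dmf hDne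
  have hgprops := Finset.mem_filter.1 (hDmf ▸ hgD)
  obtain ⟨-, hgc, hgN, hgm⟩ := hgprops
  refine ⟨g, hgc, ?_⟩
  intro d hd
  have hd2 : d.2 ∈ G.support := coeffOf_ne_zero_mem_support hd
  have hNd : N d.2 ≤ M := hNle _ hd2
  rw [← hgN] at hNd
  have hb' : degSum g.2 ≤ Big := Finset.le_sup (coeffOf_ne_zero_mem_support hgc)
  rcases keylex hb' hNd with h | ⟨hLeq, hdeg⟩
  · exact Or.inr (Or.inl h)
  · rcases Nat.lt_or_ge (degSum d.2) (degSum g.2) with h2 | h2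
    · exact Or.inr (Or.inr ⟨hLeq, Or.inl h2⟩)
    · have hdeq : degSum d.2 = degSum g.2 := by omega
      have hNdM : N d.2 = M := by rw [← hgN, hN]; simp only; rw [hLeq, hdeq]
      have hmle : m ≤ degSum d.1 := Nat.find_min' hpred ⟨d, hd, hNdM, rfl⟩
      rcases Nat.lt_or_ge m (degSum d.1) with h3 | h3
      · exact Or.inr (Or.inr ⟨hLeq, Or.inr ⟨hdeq, Or.inl (by omega)⟩⟩)
      · have : degSum d.1 = m := by omega
        exact hgmax d (hmemD d hd hNdM this)

lemma coeffOf_sub (A B : Rxz n q k) (v : Expo n q) :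
    coeffOf (A - B) v = coeffOf A v - coeffOf B v := by
  simp [coeffOf, MvPolynomial.coeff_sub]

include hwf htrans in
lemma coeff_eq_zero_of_prec {X : Rxz n q k} {w v : Expo n q}
    (hmax : ∀ d, coeffOf X d ≠ 0 → d = w ∨ PrecL l lt0 d w)
    (hlt : PrecL l lt0 w v) : coeffOf X v = 0 := by
  by_contra h
  rcases hmax v h with rfl | h2
  · exact prec_irrefl hwf v hlt
  · exact prec_asymm htrans hwf h2 hlt

include hwf htrans hadd in
lemma add_eq_of_prec_le {a a' b b' : Expo n q}
    (h1 : a = a' ∨ PrecL l lt0 a a') (h2 : b = b' ∨ PrecL l lt0 b b')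
    (hsum : a + b = a' + b') : a = a' ∧ b = b' := by
  have strict : ∀ {x x' y y' : Expo n q}, PrecL l lt0 x x' →
      (y = y' ∨ PrecL l lt0 y y') → x + y = x' + y' → False := by
    intro x x' y y' hx hy hxy
    have hstep : PrecL l lt0 (x + y) (x' + y) := prec_add hadd y hx
    have : PrecL l lt0 (x + y) (x' + y') := by
      rcases hy with rfl | hy
      · exact hstep
      · exact prec_trans htrans hstep (prec_add_left hadd x' hy)
    rw [hxy] at this
    exact prec_irrefl hwf _ this
  rcases h1 with rfl | h1
  · rcases h2 with rfl | h2
    · exact ⟨rfl, rfl⟩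
    · exact absurd (add_left_cancel hsum) (prec_ne hwf h2)
  · exact absurd hsum.symm (fun hh => strict h1 h2 hsum)

include hwf htrans hadd in
lemma mul_priv {A B : Rxz n q k} {a b : Expo n q}
    (hA : IsPrivExp (PrecL l lt0) A a) (hB : IsPrivExp (PrecL l lt0) B b) :
    coeffOf (A * B) (a + b) = coeffOf A a * coeffOf B b ∧
    (∀ v, coeffOf (A * B) v ≠ 0 → v = a + b ∨ PrecL l lt0 v (a + b)) := by
  classical
  constructor
  · rw [coeffOf_mul]
    apply Finset.sum_eq_single_of_mem (a, b) (mem_pairsOf.2 rfl)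
    intro p hp hpne
    by_contra hterm
    have h1 : coeffOf A p.1 ≠ 0 := fun h0 => hterm (by rw [h0, zero_mul])
    have h2 : coeffOf B p.2 ≠ 0 := fun h0 => hterm (by rw [h0, mul_zero])
    have hsum := mem_pairsOf.1 hp
    obtain ⟨ha, hb⟩ := add_eq_of_prec_le htrans hwf hadd (hA.2 _ h1) (hB.2 _ h2) hsum
    exact hpne (Prod.ext ha hb)
  · intro v hv
    rw [coeffOf_mul] at hv
    obtain ⟨p, hp, hterm⟩ := Finset.exists_ne_zero_of_sum_ne_zero hv
    have h1 : coeffOf A p.1 ≠ 0 := fun h0 => hterm (by rw [h0, zero_mul])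
    have h2 : coeffOf B p.2 ≠ 0 := fun h0 => hterm (by rw [h0, mul_zero])
    have hsum := mem_pairsOf.1 hp
    rw [← hsum]
    exact prec_add_le htrans hadd (hA.2 _ h1) (hB.2 _ h2)


lemma deltaJ_inj {r : ℕ} {e : Fin r → Expo n q} {i j : Fin r} {v : Expo n q}
    (hi : v ∈ DeltaJ e i) (hj : v ∈ DeltaJ e j) : i = j := by
  rcases lt_trichotomy i j with h | h | h
  · exact absurd hi.1 (hj.2 i h)
  · exact h
  · exact absurd hj.1 (hi.2 j h)

lemma deltaJ_not_bar {r : ℕ} {e : Fin r → Expo n q} {j : Fin r} {v : Expo n q}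
    (hj : v ∈ DeltaJ e j) (hb : v ∈ DeltaBar e) : False := hb j hj.1

include htri htrans hwf hadd in
lemma zero_of_conds {r : ℕ} {P : Fin r → Rxz n q k}
    {e : Fin r → Expo n q} (he : ∀ j, IsPrivExp (PrecL l lt0) (P j) (e j))
    (D : Fin r → Rxz n q k) (S : Rxz n q k)
    (hsum : ∑ j, D j * P j + S = 0)
    (hD : ∀ j, ∀ d ∈ newtonDiag (D j), d + e j ∈ DeltaJ e j)
    (hS : newtonDiag S ⊆ DeltaBar e) :
    (∀ j, D j = 0) ∧ S = 0 := by
  classical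
  by_contra hcon
  have hne : (∃ j, D j ≠ 0) ∨ S ≠ 0 := by
    by_contra h; push_neg at h; exact hcon ⟨h.1, h.2⟩
  -- privileged exponents of the nonzero D j and of S
  have haspec : ∀ j, D j ≠ 0 → ∃ a, IsPrivExp (PrecL l lt0) (D j) a :=
    fun j h => exists_privExp htri htrans (D j) h
  set aexp : Fin r → Expo n q :=
    fun j => if h : D j ≠ 0 then (haspec j h).choose else 0 with haexp
  have haexp_spec : ∀ j, D j ≠ 0 → IsPrivExp (PrecL l lt0) (D j) (aexp j) := by
    intro j h
    rw [haexp]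
    simp only [h, dif_pos, ne_eq, not_false_eq_true]
    exact (haspec j h).choose_spec
  set sexp : Expo n q := if h : S ≠ 0 then (exists_privExp htri htrans S h).choose else 0
    with hsexp
  have hsexp_spec : S ≠ 0 → IsPrivExp (PrecL l lt0) S sexp := by
    intro h
    rw [hsexp]
    simp only [h, dif_pos, ne_eq, not_false_eq_true]
    exact (exists_privExp htri htrans S h).choose_spec
  set wj : Fin r → Expo n q := fun j => aexp j + e j with hwj
  set T : Finset (Expo n q) := (Finset.univ.filter (fun j => D j ≠ 0)).image wj with hT
  set TS : Finset (Expo n q) := if S = 0 then T else insert sexp T with hTS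
  have hTsub : T ⊆ TS := by
    rw [hTS]
    by_cases h : S = 0
    · rw [if_pos h]
    · rw [if_neg h]; exact Finset.subset_insert _ _
  have hmemT : ∀ j, D j ≠ 0 → wj j ∈ TS := by
    intro j h
    exact hTsub (Finset.mem_image_of_mem wj (Finset.mem_filter.2 ⟨Finset.mem_univ j, h⟩))
  have hmemS : S ≠ 0 → sexp ∈ TS := by
    intro h; rw [hTS, if_neg h]; exact Finset.mem_insert_self _ _
  have hTSne : TS.Nonempty := by
    rcases hne with ⟨j, hj⟩ | hs
    · exact ⟨wj j, hmemT j hj⟩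
    · exact ⟨sexp, hmemS hs⟩
  obtain ⟨v, hvTS, hvmax⟩ := exists_prec_max htri htrans TS hTSne
  -- the slot of each nonzero D j lies in Δⱼ
  have hslot : ∀ j, (h : D j ≠ 0) → wj j ∈ DeltaJ e j := by
    intro j h
    exact hD j (aexp j) ((haexp_spec j h).1)
  have hSslot : S ≠ 0 → sexp ∈ DeltaBar e := fun h => hS (hsexp_spec h).1
  -- coefficient of the sum at v is zero
  have h0 : (∑ j, coeffOf (D j * P j) v) + coeffOf S v = 0 := by
    rw [← coeffOf_sum, ← coeffOf_add, hsum, coeffOf_zero]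
  -- terms for j whose slot is not v vanish
  have hterm0 : ∀ j, wj j ≠ v ∨ D j = 0 → coeffOf (D j * P j) v = 0 := by
    intro j hj
    by_cases h : D j = 0
    · rw [h, zero_mul, coeffOf_zero]
    · rcases hj with hj | hj
      · have hmem := hmemT j h
        have hprec : PrecL l lt0 (wj j) v := by
          rcases hvmax _ hmem with heq | hp
          · exact absurd heq hj
          · exact hp
        exact coeff_eq_zero_of_prec htrans hwf
          (mul_priv htrans hwf hadd (haexp_spec j h) (he j)).2 hprec
      · exact absurd hj h
  have hScoeff0 : sexp ≠ v ∨ S = 0 → coeffOf S v = 0 := by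
    intro hj
    by_cases h : S = 0
    · rw [h, coeffOf_zero]
    · rcases hj with hj | hj
      · have hprec : PrecL l lt0 sexp v := by
          rcases hvmax _ (hmemS h) with heq | hp
          · exact absurd heq hj
          · exact hp
        exact coeff_eq_zero_of_prec htrans hwf (hsexp_spec h).2 hprec
      · exact absurd hj h
  by_cases hA : ∃ j₀, D j₀ ≠ 0 ∧ wj j₀ = v
  · obtain ⟨j₀, hj₀, hwj₀⟩ := hA
    have hvΔ : v ∈ DeltaJ e j₀ := hwj₀ ▸ hslot j₀ hj₀
    have hsum1 : (∑ j, coeffOf (D j * P j) v) = coeffOf (D j₀ * P j₀) v := by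
      apply Finset.sum_eq_single_of_mem j₀ (Finset.mem_univ j₀)
      intro j _ hjne
      apply hterm0 j
      by_cases h : D j = 0
      · exact Or.inr h
      · left
        intro hwv
        exact hjne (deltaJ_inj (hwv ▸ hslot j h) hvΔ)
    have hScoeff : coeffOf S v = 0 := by
      apply hScoeff0
      by_cases h : S = 0
      · exact Or.inr h
      · left
        intro hsv
        exact deltaJ_not_bar hvΔ (hsv ▸ hSslot h)
    have hprod : coeffOf (D j₀ * P j₀) v ≠ 0 := by
      rw [← hwj₀, hwj]
      simp only
      rw [(mul_priv htrans hwf hadd (haexp_spec j₀ hj₀) (he j₀)).1]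
      exact mul_ne_zero (haexp_spec j₀ hj₀).1 (he j₀).1
    rw [hsum1, hScoeff, add_zero] at h0
    exact hprod h0
  · push_neg at hA
    have hsum1 : (∑ j, coeffOf (D j * P j) v) = 0 := by
      apply Finset.sum_eq_zero
      intro j _
      apply hterm0 j
      by_cases h : D j = 0
      · exact Or.inr h
      · exact Or.inl (hA j h)
    have hSne : S ≠ 0 ∧ sexp = v := by
      have : v ∈ TS := hvTS
      rw [hTS] at this
      by_cases h : S = 0
      · rw [if_pos h] at this
        rw [hT] at this
        obtain ⟨j, hjmem, hjw⟩ := Finset.mem_image.1 this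
        exact absurd hjw (hA j (Finset.mem_filter.1 hjmem).2)
      · rw [if_neg h] at this
        rcases Finset.mem_insert.1 this with heq | hmem
        · exact ⟨h, heq.symm⟩
        · rw [hT] at hmem
          obtain ⟨j, hjmem, hjw⟩ := Finset.mem_image.1 hmem
          exact absurd hjw (hA j (Finset.mem_filter.1 hjmem).2)
    rw [hsum1, zero_add] at h0
    rw [← hSne.2] at h0
    exact (hsexp_spec hSne.1).1 h0

end

section Existence

variable (l lt0)
variable {r : ℕ} (P : Fin r → Rxz n q k) (e : Fin r → Expo n q) (F : Rxz n q k)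

/-- ψ-weight on z-exponents. -/
def psiB (C : ℕ) (β : Fin q →₀ ℕ) : ℕ := degSum β + C * Lform l β

lemma degSum_le_psiB (C : ℕ) (β : Fin q →₀ ℕ) : degSum β ≤ psiB l C β :=
  Nat.le_add_right _ _

lemma psiB_add (C : ℕ) (β γ : Fin q →₀ ℕ) :
    psiB l C (β + γ) = psiB l C β + psiB l C γ := by
  simp only [psiB, degSum_add, Lform_add]; ring

/-- Bound on the z-degrees of the divisors. -/
def Cc : ℕ := Finset.univ.sup (fun j => (P j).support.sup degSum)

/-- Global ψ-bound coming from the dividend `F`. -/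
def Psi0 : ℕ := F.support.sup (fun β => psiB l (Cc P) β)

lemma coeffF_eq_zero {v : Expo n q} (hv : ¬ psiB l (Cc P) v.2 ≤ Psi0 l P F) :
    coeffOf F v = 0 := by
  by_contra h
  exact hv (Finset.le_sup (coeffOf_ne_zero_mem_support h))

/-- Key ψ-monotonicity: a divisor exponent `d''` weakly below `e j` has
ψ-weight at most that of `e j`. -/
lemma psiB_le_of_le {j : Fin r} {d : Expo n q}
    (hDN : coeffOf (P j) d ≠ 0) (hle : d = e j ∨ PrecL l lt0 d (e j)) :
    psiB l (Cc P) d.2 ≤ psiB l (Cc P) (e j).2 := by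
  have hb : degSum d.2 ≤ Cc P := by
    refine le_trans (Finset.le_sup (f := degSum) (coeffOf_ne_zero_mem_support hDN)) ?_
    exact Finset.le_sup (f := fun j => (P j).support.sup degSum) (Finset.mem_univ j)
  rcases hle with rfl | hp
  · exact le_refl _
  · rcases hp with h | ⟨h1, h | ⟨h2, _⟩⟩
    · -- strict drop in L
      simp only [psiB]
      have : Cc P * (Lform l d.2 + 1) ≤ Cc P * Lform l (e j).2 :=
        Nat.mul_le_mul_left _ (by omega)
      have hmul : Cc P * (Lform l d.2 + 1) = Cc P * Lform l d.2 + Cc P := by ring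
      omega
    · have hLs : Cc P * Lform l d.2 = Cc P * Lform l (e j).2 := by rw [h1]
      simp only [psiB]; omega
    · have hLs : Cc P * Lform l d.2 = Cc P * Lform l (e j).2 := by rw [h1]
      simp only [psiB]; omega

/-- ψ-weight of an actual slot `u + d''` is at most that of the leading slot `u + e j`. -/
lemma psiB_slot_le {j : Fin r} {d u : Expo n q}
    (hDN : coeffOf (P j) d ≠ 0) (hle : d = e j ∨ PrecL l lt0 d (e j)) :
    psiB l (Cc P) (u + d).2 ≤ psiB l (Cc P) (u + e j).2 := by
  have h2 : (u + d).2 = u.2 + d.2 := rfl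
  have h3 : (u + e j).2 = u.2 + (e j).2 := rfl
  rw [h2, h3, psiB_add, psiB_add]
  exact Nat.add_le_add_left (psiB_le_of_le l lt0 P e hDN hle) _

/-- The gate for recursive calls. -/
def gate (v : Expo n q) (i : Fin r) (p : Expo n q × Expo n q) : Prop :=
  p.1 + p.2 = v ∧ coeffOf (P i) p.2 ≠ 0 ∧ p.2 ≠ e i ∧
    (p.1 + e i) ∈ DeltaJ e i ∧ psiB l (Cc P) (p.1 + e i).2 ≤ Psi0 l P F

section
variable (hwf : WellFounded lt0)
  (hadd : ∀ a b c : Expo n q, lt0 a b → lt0 (a + c) (b + c))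
  (he : ∀ j, IsPrivExp (PrecL l lt0) (P j) (e j))

include hadd he in
lemma gate_rel {v : Expo n q} {i : Fin r} {p : Expo n q × Expo n q}
    (h : gate l P e F v i p) :
    PrecL l lt0 v (p.1 + e i) ∧ degSum (p.1 + e i).2 ≤ Psi0 l P F := by
  obtain ⟨hsum, hDN, hne, _, hpsi⟩ := h
  have hp2 : PrecL l lt0 p.2 (e i) := by
    rcases (he i).2 p.2 hDN with heq | hp
    · exact absurd heq hne
    · exact hp
  constructor
  · rw [← hsum]
    exact prec_add_left hadd p.1 hp2
  · exact le_trans (degSum_le_psiB l _ _) hpsi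

/-- The recursively defined slot values. -/
def val : Expo n q → k :=
  (rel_wf (l := l) hwf (Psi0 l P F)).fix
    (fun v ih =>
      let S : k := ∑ i : Fin r, ∑ p ∈ (pairsOf v).attach,
        if h : gate l P e F v i p.1 then
          ih (p.1.1 + e i) (gate_rel l lt0 P e F hadd he h) * coeffOf (P i) p.1.2
        else 0
      if hv : ∃ j, v ∈ DeltaJ e j then
        (coeffOf F v - S) / coeffOf (P hv.choose) (e hv.choose)
      else coeffOf F v - S)

/-- The non-recursive form of the body. -/
def bodySum (g : Expo n q → k) (v : Expo n q) : k :=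
  ∑ i : Fin r, ∑ p ∈ pairsOf v,
    if gate l P e F v i p then g (p.1 + e i) * coeffOf (P i) p.2 else 0

/-- One step of the division process. -/
def step (g : Expo n q → k) (v : Expo n q) : k :=
  if hv : ∃ j, v ∈ DeltaJ e j then
    (coeffOf F v - bodySum l P e F g v) / coeffOf (P hv.choose) (e hv.choose)
  else coeffOf F v - bodySum l P e F g v

lemma bodySum_attach (g : Expo n q → k) (v : Expo n q) :
    (∑ i : Fin r, ∑ p ∈ (pairsOf v).attach,
      if h : gate l P e F v i p.1 then g (p.1.1 + e i) * coeffOf (P i) p.1.2 else 0) =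
    bodySum l P e F g v := by
  unfold bodySum
  refine Finset.sum_congr rfl (fun i _ => ?_)
  rw [← Finset.sum_attach (pairsOf v)
    (fun p => if gate l P e F v i p then g (p.1 + e i) * coeffOf (P i) p.2 else 0)]
  refine Finset.sum_congr rfl (fun p _ => ?_)
  split <;> rfl

lemma val_eq (v : Expo n q) :
    val l lt0 P e F hwf hadd he v =
      step l P e F (val l lt0 P e F hwf hadd he) v := by
  unfold val
  rw [WellFounded.fix_eq]
  unfold step
  by_cases hv : ∃ j, v ∈ DeltaJ e j
  · rw [dif_pos hv, dif_pos hv]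
    rw [← bodySum_attach]
  · rw [dif_neg hv, dif_neg hv]
    rw [← bodySum_attach]

/-- Quotient coefficients. -/
def qfun (j : Fin r) (u : Expo n q) : k :=
  if (u + e j) ∈ DeltaJ e j ∧ psiB l (Cc P) (u + e j).2 ≤ Psi0 l P F then
    val l lt0 P e F hwf hadd he (u + e j)
  else 0

/-- Remainder coefficients. -/
def rfun (v : Expo n q) : k :=
  if v ∈ DeltaBar e ∧ psiB l (Cc P) v.2 ≤ Psi0 l P F then
    val l lt0 P e F hwf hadd he v
  else 0

end

/-- Reconstruction of an element of `Rxz` from a coefficient function with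
bounded z-support. -/
def mkRxz (B : ℕ) (g : Expo n q → k) : Rxz n q k :=
  ∑ β ∈ Finset.Iic (Finsupp.equivFunOnFinite.symm (fun _ : Fin q => B)),
    MvPolynomial.monomial β ((fun α => g (α, β)) : MvPowerSeries (Fin n) k)

lemma coeffOf_mkRxz (B : ℕ) (g : Expo n q → k) (hg : ∀ d, g d ≠ 0 → degSum d.2 ≤ B)
    (d : Expo n q) : coeffOf (mkRxz B g) d = g d := by
  classical
  rw [coeffOf, mkRxz, MvPolynomial.coeff_sum]
  erw [Finset.sum_congr rfl (fun x _ => MvPolynomial.coeff_monomial d.2 x _)]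
  erw [Finset.sum_ite_eq' _ d.2 (fun x => ((fun α => g (α, x)) : MvPowerSeries (Fin n) k))]
  by_cases hmem : d.2 ∈ Finset.Iic (Finsupp.equivFunOnFinite.symm fun _ : Fin q => B)
  · rw [if_pos hmem]
    rfl
  · erw [if_neg hmem, map_zero]
    by_contra hne
    apply hmem
    rw [Finset.mem_Iic, Finsupp.le_def]
    intro i
    have h1 := component_le_degSum d.2 i
    have h2 := hg d (fun h0 => hne h0.symm)
    simp only [Finsupp.coe_equivFunOnFinite_symm]
    omega

lemma exists_deltaJ_of_inShift {r : ℕ} {e : Fin r → Expo n q} {v : Expo n q}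
    (h : ∃ j, inShift (e j) v) : ∃ j, v ∈ DeltaJ e j := by
  classical
  set s : Finset (Fin r) := Finset.univ.filter (fun j => inShift (e j) v) with hs
  have hne : s.Nonempty := by
    obtain ⟨j, hj⟩ := h
    exact ⟨j, by simp [hs, hj]⟩
  refine ⟨s.min' hne, (Finset.mem_filter.1 (s.min'_mem hne)).2, ?_⟩
  intro kk hk hks
  have : kk ∈ s := Finset.mem_filter.2 ⟨Finset.mem_univ kk, hks⟩
  exact absurd (s.min'_le kk this) (not_le.2 hk)

lemma cond_sub {A B : Rxz n q k} {Pd : Expo n q → Prop}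
    (hA : A = 0 ∨ ∀ d ∈ newtonDiag A, Pd d) (hB : B = 0 ∨ ∀ d ∈ newtonDiag B, Pd d) :
    ∀ d ∈ newtonDiag (A - B), Pd d := by
  intro d hd
  have hd' : coeffOf (A - B) d ≠ 0 := hd
  have hor : coeffOf A d ≠ 0 ∨ coeffOf B d ≠ 0 := by
    by_contra hcon
    push_neg at hcon
    exact hd' (by rw [coeffOf_sub, hcon.1, hcon.2, sub_self])
  rcases hor with h | h
  · rcases hA with rfl | hA
    · exact absurd (coeffOf_zero d) h
    · exact hA d h
  · rcases hB with rfl | hB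
    · exact absurd (coeffOf_zero d) h
    · exact hB d h

section
variable (hwf : WellFounded lt0)
  (hadd : ∀ a b c : Expo n q, lt0 a b → lt0 (a + c) (b + c))
  (he : ∀ j, IsPrivExp (PrecL l lt0) (P j) (e j))

/-- The quotients, as elements of `Rxz`. -/
def Qpoly (j : Fin r) : Rxz n q k :=
  mkRxz (Psi0 l P F) (qfun l lt0 P e F hwf hadd he j)

/-- The remainder, as an element of `Rxz`. -/
def Rpoly : Rxz n q k :=
  mkRxz (Psi0 l P F) (rfun l lt0 P e F hwf hadd he)

lemma qfun_ne_zero {j : Fin r} {u : Expo n q}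
    (h : qfun l lt0 P e F hwf hadd he j u ≠ 0) :
    (u + e j) ∈ DeltaJ e j ∧ psiB l (Cc P) (u + e j).2 ≤ Psi0 l P F := by
  by_contra hcon
  rw [qfun, if_neg hcon] at h
  exact h rfl

lemma rfun_ne_zero {v : Expo n q}
    (h : rfun l lt0 P e F hwf hadd he v ≠ 0) :
    v ∈ DeltaBar e ∧ psiB l (Cc P) v.2 ≤ Psi0 l P F := by
  by_contra hcon
  rw [rfun, if_neg hcon] at h
  exact h rfl

lemma coeffOf_Qpoly (j : Fin r) (d : Expo n q) :
    coeffOf (Qpoly l lt0 P e F hwf hadd he j) d = qfun l lt0 P e F hwf hadd he j d := by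
  apply coeffOf_mkRxz
  intro u hu
  have h2 := (qfun_ne_zero l lt0 P e F hwf hadd he hu).2
  have h3 : degSum (u + e j).2 = degSum u.2 + degSum (e j).2 := degSum_add _ _
  have h4 := degSum_le_psiB l (Cc P) (u + e j).2
  omega

lemma coeffOf_Rpoly (d : Expo n q) :
    coeffOf (Rpoly l lt0 P e F hwf hadd he) d = rfun l lt0 P e F hwf hadd he d := by
  apply coeffOf_mkRxz
  intro u hu
  have h2 := (rfun_ne_zero l lt0 P e F hwf hadd he hu).2
  have h4 := degSum_le_psiB l (Cc P) u.2
  omega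

/-- The central identity satisfied by the constructed coefficients, slot by slot. -/
lemma slot_identity (v : Expo n q) :
    coeffOf F v =
      (∑ j, ∑ p ∈ pairsOf v,
        qfun l lt0 P e F hwf hadd he j p.1 * coeffOf (P j) p.2) +
      rfun l lt0 P e F hwf hadd he v := by
  classical
  by_cases hpsi : psiB l (Cc P) v.2 ≤ Psi0 l P F
  · by_cases hv : ∃ j, v ∈ DeltaJ e j
    · -- v lies in some Δⱼ
      have hj₀ : v ∈ DeltaJ e hv.choose := hv.choose_spec
      obtain ⟨γ, hγ⟩ := hj₀.1
      have hp₀mem : (γ, e hv.choose) ∈ pairsOf v := mem_pairsOf.2 (by rw [add_comm]; exact hγ.symm)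
      have hrfun : rfun l lt0 P e F hwf hadd he v = 0 := by
        rw [rfun, if_neg]
        intro hcon
        exact hcon.1 hv.choose hj₀.1
      have hcp : coeffOf (P hv.choose) (e hv.choose) ≠ 0 := (he hv.choose).1
      have hval := val_eq l lt0 P e F hwf hadd he v
      rw [step, dif_pos hv] at hval
      have hmul : val l lt0 P e F hwf hadd he v * coeffOf (P hv.choose) (e hv.choose) =
          coeffOf F v - bodySum l P e F (val l lt0 P e F hwf hadd he) v := by
        rw [hval]
        exact div_mul_cancel₀ _ hcp
      have key : ∀ i : Fin r, ∀ p ∈ pairsOf v,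
          qfun l lt0 P e F hwf hadd he i p.1 * coeffOf (P i) p.2 =
          (if gate l P e F v i p then
            val l lt0 P e F hwf hadd he (p.1 + e i) * coeffOf (P i) p.2 else 0) +
          (if i = hv.choose ∧ p = (γ, e hv.choose) then
            val l lt0 P e F hwf hadd he v * coeffOf (P hv.choose) (e hv.choose) else 0) := by
        intro i p hp
        have hpsum : p.1 + p.2 = v := mem_pairsOf.1 hp
        by_cases hd : p.2 = e i
        · have hg : ¬ gate l P e F v i p := fun hgg => hgg.2.2.1 hd
          rw [if_neg hg, zero_add]
          have hvi : p.1 + e i = v := by rw [← hd]; exact hpsum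
          by_cases hqg : (p.1 + e i) ∈ DeltaJ e i ∧ psiB l (Cc P) (p.1 + e i).2 ≤ Psi0 l P F
          · have hij : i = hv.choose := deltaJ_inj (hvi ▸ hqg.1) hj₀
            have hp1 : p.1 = γ := by
              have h5 : p.1 + e i = γ + e hv.choose := by
                rw [hvi]
                exact hγ.trans (add_comm _ _)
              rw [hij] at h5
              exact add_right_cancel h5
            have hpp : p = (γ, e hv.choose) := by
              rw [Prod.ext_iff]
              exact ⟨hp1, by rw [hd, hij]⟩
            rw [if_pos ⟨hij, hpp⟩, qfun, if_pos hqg, hvi, hd, hij]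
          · have hne2 : ¬ (i = hv.choose ∧ p = (γ, e hv.choose)) := by
              intro hcon
              apply hqg
              constructor
              · rw [hvi, hcon.1]; exact hj₀
              · rw [hvi]; exact hpsi
            rw [if_neg hne2, qfun, if_neg hqg, zero_mul]
        · have hne2 : ¬ (i = hv.choose ∧ p = (γ, e hv.choose)) := by
            intro hcon
            apply hd
            rw [hcon.2, hcon.1]
          rw [if_neg hne2, add_zero]
          by_cases hc : coeffOf (P i) p.2 = 0
          · rw [hc]
            simp only [mul_zero, ite_self]
          · have hiff : gate l P e F v i p ↔
                ((p.1 + e i) ∈ DeltaJ e i ∧ psiB l (Cc P) (p.1 + e i).2 ≤ Psi0 l P F) :=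
              ⟨fun h => ⟨h.2.2.2.1, h.2.2.2.2⟩, fun h => ⟨hpsum, hc, hd, h.1, h.2⟩⟩
            by_cases hqg : (p.1 + e i) ∈ DeltaJ e i ∧ psiB l (Cc P) (p.1 + e i).2 ≤ Psi0 l P F
            · rw [qfun, if_pos hqg, if_pos (hiff.2 hqg)]
            · rw [qfun, if_neg hqg, if_neg (fun hgg => hqg (hiff.1 hgg)), zero_mul]
      have hsplit : (∑ j, ∑ p ∈ pairsOf v,
          qfun l lt0 P e F hwf hadd he j p.1 * coeffOf (P j) p.2) =
          bodySum l P e F (val l lt0 P e F hwf hadd he) v +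
          val l lt0 P e F hwf hadd he v * coeffOf (P hv.choose) (e hv.choose) := by
        have h1 : (∑ j, ∑ p ∈ pairsOf v,
            qfun l lt0 P e F hwf hadd he j p.1 * coeffOf (P j) p.2) =
            (∑ i : Fin r, ∑ p ∈ pairsOf v,
              ((if gate l P e F v i p then
                val l lt0 P e F hwf hadd he (p.1 + e i) * coeffOf (P i) p.2 else 0) +
              (if i = hv.choose ∧ p = (γ, e hv.choose) then
                val l lt0 P e F hwf hadd he v * coeffOf (P hv.choose) (e hv.choose) else 0))) :=
          Finset.sum_congr rfl (fun i _ => Finset.sum_congr rfl (fun p hp => key i p hp))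
        rw [h1]
        simp only [Finset.sum_add_distrib]
        congr 1
        rw [Finset.sum_eq_single_of_mem hv.choose (Finset.mem_univ _)]
        · rw [Finset.sum_eq_single_of_mem (γ, e hv.choose) hp₀mem]
          · rw [if_pos ⟨rfl, rfl⟩]
          · intro p hpmem hne
            exact if_neg (fun hcon => hne hcon.2)
        · intro j _ hne
          exact Finset.sum_eq_zero (fun p _ => if_neg (fun hcon => hne hcon.1))
      rw [hsplit, hrfun, add_zero, hmul]
      ring
    · -- v lies in the residual region
      have hbar : v ∈ DeltaBar e := by
        intro j hshift
        exact hv (exists_deltaJ_of_inShift ⟨j, hshift⟩)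
      have hval := val_eq l lt0 P e F hwf hadd he v
      rw [step, dif_neg hv] at hval
      have hrfun : rfun l lt0 P e F hwf hadd he v = val l lt0 P e F hwf hadd he v := by
        rw [rfun, if_pos ⟨hbar, hpsi⟩]
      have key : ∀ i : Fin r, ∀ p ∈ pairsOf v,
          qfun l lt0 P e F hwf hadd he i p.1 * coeffOf (P i) p.2 =
          (if gate l P e F v i p then
            val l lt0 P e F hwf hadd he (p.1 + e i) * coeffOf (P i) p.2 else 0) := by
        intro i p hp
        have hpsum : p.1 + p.2 = v := mem_pairsOf.1 hp
        by_cases hd : p.2 = e i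
        · have hg : ¬ gate l P e F v i p := fun hgg => hgg.2.2.1 hd
          rw [if_neg hg]
          have hvi : p.1 + e i = v := by rw [← hd]; exact hpsum
          have hqg : ¬ ((p.1 + e i) ∈ DeltaJ e i ∧ psiB l (Cc P) (p.1 + e i).2 ≤ Psi0 l P F) := by
            intro hcon
            exact hv ⟨i, hvi ▸ hcon.1⟩
          rw [qfun, if_neg hqg, zero_mul]
        · by_cases hc : coeffOf (P i) p.2 = 0
          · rw [hc]
            simp only [mul_zero, ite_self]
          · have hiff : gate l P e F v i p ↔
                ((p.1 + e i) ∈ DeltaJ e i ∧ psiB l (Cc P) (p.1 + e i).2 ≤ Psi0 l P F) :=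
              ⟨fun h => ⟨h.2.2.2.1, h.2.2.2.2⟩, fun h => ⟨hpsum, hc, hd, h.1, h.2⟩⟩
            by_cases hqg : (p.1 + e i) ∈ DeltaJ e i ∧ psiB l (Cc P) (p.1 + e i).2 ≤ Psi0 l P F
            · rw [qfun, if_pos hqg, if_pos (hiff.2 hqg)]
            · rw [qfun, if_neg hqg, if_neg (fun hgg => hqg (hiff.1 hgg)), zero_mul]
      have hsplit : (∑ j, ∑ p ∈ pairsOf v,
          qfun l lt0 P e F hwf hadd he j p.1 * coeffOf (P j) p.2) =
          bodySum l P e F (val l lt0 P e F hwf hadd he) v :=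
        Finset.sum_congr rfl (fun i _ => Finset.sum_congr rfl (fun p hp => key i p hp))
      rw [hsplit, hrfun, hval]
      ring
  · -- ψ-weight too large: everything vanishes
    rw [coeffF_eq_zero l P F hpsi]
    have hrfun : rfun l lt0 P e F hwf hadd he v = 0 := by
      rw [rfun, if_neg (fun hcon => hpsi hcon.2)]
    have hq : ∀ i : Fin r, ∀ p ∈ pairsOf v,
        qfun l lt0 P e F hwf hadd he i p.1 * coeffOf (P i) p.2 = 0 := by
      intro i p hp
      by_cases hc : coeffOf (P i) p.2 = 0
      · rw [hc, mul_zero]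
      · have hqg : ¬ ((p.1 + e i) ∈ DeltaJ e i ∧ psiB l (Cc P) (p.1 + e i).2 ≤ Psi0 l P F) := by
          intro hcon
          apply hpsi
          have h1 := psiB_slot_le l lt0 P e (j := i) (d := p.2) (u := p.1) hc ((he i).2 p.2 hc)
          have h2 : p.1 + p.2 = v := mem_pairsOf.1 hp
          rw [h2] at h1
          exact le_trans h1 hcon.2
        rw [qfun, if_neg hqg, zero_mul]
    rw [hrfun, add_zero]
    exact (Finset.sum_eq_zero (fun i _ => Finset.sum_eq_zero (fun p hp => hq i p hp))).symm

end


section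
variable (hwf : WellFounded lt0)
  (hadd : ∀ a b c : Expo n q, lt0 a b → lt0 (a + c) (b + c))
  (he : ∀ j, IsPrivExp (PrecL l lt0) (P j) (e j))

lemma div_identity :
    F = (∑ j, Qpoly l lt0 P e F hwf hadd he j * P j) + Rpoly l lt0 P e F hwf hadd he := by
  apply rxz_ext
  intro v
  rw [coeffOf_add, coeffOf_sum]
  have hj : ∀ j, coeffOf (Qpoly l lt0 P e F hwf hadd he j * P j) v =
      ∑ p ∈ pairsOf v, qfun l lt0 P e F hwf hadd he j p.1 * coeffOf (P j) p.2 := by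
    intro j
    rw [coeffOf_mul]
    exact Finset.sum_congr rfl (fun p _ => by rw [coeffOf_Qpoly])
  simp only [hj, coeffOf_Rpoly]
  exact slot_identity l lt0 P e F hwf hadd he v

lemma Qpoly_cond (j : Fin r) :
    ∀ d ∈ newtonDiag (Qpoly l lt0 P e F hwf hadd he j), d + e j ∈ DeltaJ e j := by
  intro d hd
  have h : coeffOf (Qpoly l lt0 P e F hwf hadd he j) d ≠ 0 := hd
  rw [coeffOf_Qpoly] at h
  exact (qfun_ne_zero l lt0 P e F hwf hadd he h).1

lemma Rpoly_cond :
    newtonDiag (Rpoly l lt0 P e F hwf hadd he) ⊆ DeltaBar e := by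
  intro d hd
  have h : coeffOf (Rpoly l lt0 P e F hwf hadd he) d ≠ 0 := hd
  rw [coeffOf_Rpoly] at h
  exact (rfun_ne_zero l lt0 P e F hwf hadd he h).1

end

end Existence


end Div


/-- Division theorem (commutative case of Théorème 3.1): division of any `F ∈ R_k` by
nonzero `P_1, …, P_r` with privileged exponents `e_1, …, e_r`, with a unique quotient-remainder
tuple subject to the support conditions given by the partition `Δ_1, …, Δ_r, Δ̄`. -/
theorem division_theorem
    (n q : ℕ) (hn : 0 < n) (hq : 0 < q)
    (k : Type) [Field k] [CharZero k]
    (l : Fin q → ℕ)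
    (lt0 : Expo n q → Expo n q → Prop)
    (hlt0_tri : ∀ a b : Expo n q, lt0 a b ∨ a = b ∨ lt0 b a)
    (hlt0_trans : ∀ a b c : Expo n q, lt0 a b → lt0 b c → lt0 a c)
    (hlt0_wf : WellFounded lt0)
    (hlt0_add : ∀ a b c : Expo n q, lt0 a b → lt0 (a + c) (b + c))
    (r : ℕ) (P : Fin r → Rxz n q k) (hP : ∀ j, P j ≠ 0)
    (e : Fin r → Expo n q) (he : ∀ j, IsPrivExp (PrecL l lt0) (P j) (e j))
    (F : Rxz n q k) :
    ∃! QR : (Fin r → Rxz n q k) × Rxz n q k,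
      (F = ∑ j, QR.1 j * P j + QR.2) ∧
      (∀ j, QR.1 j = 0 ∨ ∀ d ∈ newtonDiag (QR.1 j), d + e j ∈ DeltaJ e j) ∧
      (QR.2 = 0 ∨ newtonDiag QR.2 ⊆ DeltaBar e) := by
  classical
  refine ⟨(fun j => Div.Qpoly l lt0 P e F hlt0_wf hlt0_add he j,
      Div.Rpoly l lt0 P e F hlt0_wf hlt0_add he), ⟨?_, ?_, ?_⟩, ?_⟩
  · exact Div.div_identity l lt0 P e F hlt0_wf hlt0_add he
  · intro j
    exact Or.inr (Div.Qpoly_cond l lt0 P e F hlt0_wf hlt0_add he j)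
  · exact Or.inr (Div.Rpoly_cond l lt0 P e F hlt0_wf hlt0_add he)
  · rintro ⟨Q', R'⟩ ⟨hy1, hy2, hy3⟩
    have hx1 := Div.div_identity l lt0 P e F hlt0_wf hlt0_add he
    have hsum0 : (∑ j, (Q' j - Div.Qpoly l lt0 P e F hlt0_wf hlt0_add he j) * P j) +
        (R' - Div.Rpoly l lt0 P e F hlt0_wf hlt0_add he) = 0 := by
      have hdist : (∑ j, (Q' j - Div.Qpoly l lt0 P e F hlt0_wf hlt0_add he j) * P j) =
          (∑ j, Q' j * P j) - ∑ j, Div.Qpoly l lt0 P e F hlt0_wf hlt0_add he j * P j := by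
        rw [← Finset.sum_sub_distrib]
        exact Finset.sum_congr rfl (fun j _ => sub_mul _ _ _)
      rw [hdist, sub_add_sub_comm, ← hy1, ← hx1, sub_self]
    have hDcond : ∀ j, ∀ d ∈ newtonDiag
        (Q' j - Div.Qpoly l lt0 P e F hlt0_wf hlt0_add he j), d + e j ∈ DeltaJ e j :=
      fun j => Div.cond_sub (hy2 j)
        (Or.inr (Div.Qpoly_cond l lt0 P e F hlt0_wf hlt0_add he j))
    have hScond : newtonDiag (R' - Div.Rpoly l lt0 P e F hlt0_wf hlt0_add he) ⊆ DeltaBar e := by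
      intro d hd
      refine Div.cond_sub (Pd := fun d => d ∈ DeltaBar e) ?_ ?_ d hd
      · rcases hy3 with h | h
        · exact Or.inl h
        · exact Or.inr (fun x hx => h hx)
      · exact Or.inr (fun x hx => Div.Rpoly_cond l lt0 P e F hlt0_wf hlt0_add he hx)
    obtain ⟨hD0, hS0⟩ := Div.zero_of_conds hlt0_tri hlt0_trans hlt0_wf hlt0_add he
      _ _ hsum0 hDcond hScond
    refine Prod.ext ?_ ?_
    · funext j
      exact sub_eq_zero.1 (hD0 j)
    · exact sub_eq_zero.1 hS0

end
end

section
/- Existence of generic standard bases. Let J be an ideal of R_C not contained in R(Q). Then the set Exp^modQ_≺(J) ⊆ ℕ^{n+q} is stable under addition, i.e. Exp^modQ_≺(J) + ℕ^{n+q} ⊆ Exp^modQ_≺(J), and consequently J admits a generic standard basis on V(Q): there exist finitely many P_1,…,P_r ∈ J \ R(Q) such that Exp^modQ_≺(J) = ∪_{j=1}^r (exp^modQ_≺(P_j) + ℕ^{n+q}). -/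
/-
Existence of generic standard bases (Section 3 of the paper, commutative case).
-/

open Classical

noncomputable section

/-- Specialization (·)_P at a prime ideal P of C: apply coefficientwise the natural
map C → C/P → F(P) = Frac(C/P). -/
def specHom {n q : ℕ} {C : Type} [CommRing C] (P : Ideal C) :
    Rxz n q C →+* Rxz n q (FractionRing (C ⧸ P)) :=
  MvPolynomial.map (MvPowerSeries.map
    ((algebraMap (C ⧸ P) (FractionRing (C ⧸ P))).comp (Ideal.Quotient.mk P)) :
      MvPowerSeries (Fin n) C →+* MvPowerSeries (Fin n) (FractionRing (C ⧸ P)))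

/-- Membership in R(Q): all the coefficients of P lie in Q. -/
def allCoeffIn {n q : ℕ} {C : Type} [CommRing C] (Q : Ideal C) (P : Rxz n q C) : Prop :=
  ∀ d, coeffOf P d ∈ Q

/-- The set Exp^modQ_≺(J) = { exp_≺((P)_Q) : P ∈ J \ R(Q) }. -/
def expModQSet {n q : ℕ} {C : Type} [CommRing C]
    (l : Fin q → ℕ) (lt0 : Expo n q → Expo n q → Prop)
    (Q : Ideal C) (J : Ideal (Rxz n q C)) : Set (Expo n q) :=
  {d | ∃ P ∈ J, ¬ allCoeffIn Q P ∧ IsPrivExp (PrecL l lt0) (specHom Q P) d}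

section AuxA
variable {n q : ℕ}

lemma Lform_add' (l : Fin q → ℕ) (a b : Fin q →₀ ℕ) :
    Lform l (a + b) = Lform l a + Lform l b := by
  simp [Lform, Finsupp.add_apply, mul_add, Finset.sum_add_distrib]

lemma degSum_add' {σ : Type} [Fintype σ] (a b : σ →₀ ℕ) :
    degSum (a + b) = degSum a + degSum b := by
  simp [degSum, Finsupp.add_apply, Finset.sum_add_distrib]

lemma PrecL_add' (l : Fin q → ℕ) (lt0 : Expo n q → Expo n q → Prop)
    (hlt0_add : ∀ a b c : Expo n q, lt0 a b → lt0 (a + c) (b + c))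
    {d d' : Expo n q} (γ : Expo n q) (h : PrecL l lt0 d d') :
    PrecL l lt0 (d + γ) (d' + γ) := by
  simp only [PrecL, Prod.fst_add, Prod.snd_add, Lform_add', degSum_add'] at *
  rcases h with h | ⟨h1, h | ⟨h2, h | ⟨h3, h4⟩⟩⟩
  · exact Or.inl (by omega)
  · exact Or.inr ⟨by omega, Or.inl (by omega)⟩
  · exact Or.inr ⟨by omega, Or.inr ⟨by omega, Or.inl (by omega)⟩⟩
  · exact Or.inr ⟨by omega, Or.inr ⟨by omega, Or.inr ⟨by omega, hlt0_add _ _ _ h4⟩⟩⟩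

def momial' (A : Type) [CommRing A] (γ : Expo n q) : Rxz n q A :=
  MvPolynomial.monomial γ.2 (MvPowerSeries.monomial γ.1 1)

lemma coeffOf_momial_mul' (A : Type) [CommRing A] (γ d : Expo n q) (P : Rxz n q A) :
    coeffOf (momial' A γ * P) (γ + d) = coeffOf P d := by
  simp only [coeffOf, momial', Prod.fst_add, Prod.snd_add, MvPolynomial.coeff_monomial_mul]
  rw [MvPowerSeries.coeff_add_monomial_mul, one_mul]

lemma exists_of_coeffOf_momial_mul' (A : Type) [CommRing A] (γ v : Expo n q) (P : Rxz n q A)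
    (h : coeffOf (momial' A γ * P) v ≠ 0) :
    ∃ d : Expo n q, v = γ + d ∧ coeffOf P d ≠ 0 := by
  simp only [coeffOf, momial', MvPolynomial.coeff_monomial_mul'] at h
  by_cases h2 : γ.2 ≤ v.2
  · rw [if_pos h2, MvPowerSeries.coeff_monomial_mul] at h
    by_cases h1 : γ.1 ≤ v.1
    · rw [if_pos h1, one_mul] at h
      refine ⟨(v.1 - γ.1, v.2 - γ.2), ?_, h⟩
      exact Prod.ext (by simp [add_tsub_cancel_of_le h1]) (by simp [add_tsub_cancel_of_le h2])
    · rw [if_neg h1] at h; exact absurd rfl h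
  · rw [if_neg h2] at h; simp at h

lemma isPrivExp_momial_mul' {A : Type} [CommRing A] (l : Fin q → ℕ)
    (lt0 : Expo n q → Expo n q → Prop)
    (hlt0_add : ∀ a b c : Expo n q, lt0 a b → lt0 (a + c) (b + c))
    (γ e : Expo n q) (S : Rxz n q A)
    (h : IsPrivExp (PrecL l lt0) S e) :
    IsPrivExp (PrecL l lt0) (momial' A γ * S) (γ + e) := by
  constructor
  · rw [coeffOf_momial_mul']; exact h.1
  · intro d hd
    obtain ⟨d', rfl, hd'⟩ := exists_of_coeffOf_momial_mul' _ _ _ _ hd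
    rcases h.2 d' hd' with rfl | hp
    · exact Or.inl rfl
    · right
      rw [add_comm γ d', add_comm γ e]
      exact PrecL_add' l lt0 hlt0_add γ hp

lemma exists_lt0_max {X : Type} (lt0 : X → X → Prop)
    (tri : ∀ a b, lt0 a b ∨ a = b ∨ lt0 b a)
    (htrans : ∀ a b c, lt0 a b → lt0 b c → lt0 a c)
    (s : Finset X) (hs : s.Nonempty) :
    ∃ e ∈ s, ∀ d ∈ s, d = e ∨ lt0 d e := by
  induction hs using Finset.Nonempty.cons_induction with
  | singleton a => exact ⟨a, Finset.mem_singleton_self a, fun d hd =>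
      Or.inl (Finset.mem_singleton.1 hd)⟩
  | cons a s ha hs ih =>
    obtain ⟨e, he, hmax⟩ := ih
    rcases tri a e with h | heq | h
    · refine ⟨e, Finset.mem_cons_of_mem he, fun d hd => ?_⟩
      rcases Finset.mem_cons.1 hd with rfl | hd
      · exact Or.inr h
      · exact hmax d hd
    · refine ⟨e, Finset.mem_cons_of_mem he, fun d hd => ?_⟩
      rcases Finset.mem_cons.1 hd with rfl | hd
      · exact Or.inl heq
      · exact hmax d hd
    · refine ⟨a, Finset.mem_cons_self a s, fun d hd => ?_⟩
      rcases Finset.mem_cons.1 hd with rfl | hd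
      · exact Or.inl rfl
      · rcases hmax d hd with rfl | hda
        · exact Or.inr h
        · exact Or.inr (htrans _ _ _ hda h)

end AuxA

lemma exists_privExp {n q : ℕ} {A : Type} [CommRing A] (l : Fin q → ℕ)
    (lt0 : Expo n q → Expo n q → Prop)
    (tri : ∀ a b, lt0 a b ∨ a = b ∨ lt0 b a)
    (htrans : ∀ a b c, lt0 a b → lt0 b c → lt0 a c)
    (S : Rxz n q A) (hS : ∃ d, coeffOf S d ≠ 0) :
    ∃ e, IsPrivExp (PrecL l lt0) S e := by
  classical
  obtain ⟨d₀, hd₀⟩ := hS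
  have hmem : ∀ d : Expo n q, coeffOf S d ≠ 0 → d.2 ∈ S.support := by
    intro d hd
    rw [MvPolynomial.mem_support_iff]
    intro h
    exact hd (by simp [coeffOf, h])
  have hne : S.support.Nonempty := ⟨d₀.2, hmem d₀ hd₀⟩
  set M1 := (S.support.image (Lform l)).max' (hne.image _) with hM1
  set B1 := S.support.filter (fun β => Lform l β = M1) with hB1def
  have hB1ne : B1.Nonempty := by
    obtain ⟨m, hm1, hm2⟩ :=
      Finset.mem_image.1 ((S.support.image (Lform l)).max'_mem (hne.image _))
    exact ⟨m, Finset.mem_filter.2 ⟨hm1, hm2⟩⟩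
  set M2 := (B1.image degSum).max' (hB1ne.image _) with hM2
  set B2 := B1.filter (fun β => degSum β = M2) with hB2def
  have hB2ne : B2.Nonempty := by
    obtain ⟨m, hm1, hm2⟩ := Finset.mem_image.1 ((B1.image degSum).max'_mem (hB1ne.image _))
    exact ⟨m, Finset.mem_filter.2 ⟨hm1, hm2⟩⟩
  have hw : ∀ β : Fin q →₀ ℕ, β ∈ S.support →
      ∃ k, ∃ α : Fin n →₀ ℕ, degSum α = k ∧ coeffOf S (α, β) ≠ 0 := by
    intro β hβ
    have hc : MvPolynomial.coeff β S ≠ 0 := MvPolynomial.mem_support_iff.1 hβ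
    have hx : ∃ α, (MvPowerSeries.coeff α) (MvPolynomial.coeff β S) ≠ 0 := by
      by_contra hcon
      push_neg at hcon
      exact hc (MvPowerSeries.ext hcon)
    obtain ⟨α, hα⟩ := hx
    exact ⟨degSum α, α, rfl, hα⟩
  set mfun : (Fin q →₀ ℕ) → ℕ := fun β =>
    if h : β ∈ S.support then Nat.find (hw β h) else 0 with hmfun
  set M3 := (B2.image mfun).min' (hB2ne.image _) with hM3
  set B3 := B2.filter (fun β => mfun β = M3) with hB3def
  have hB3ne : B3.Nonempty := by
    obtain ⟨m, hm1, hm2⟩ := Finset.mem_image.1 ((B2.image mfun).min'_mem (hB2ne.image _))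
    exact ⟨m, Finset.mem_filter.2 ⟨hm1, hm2⟩⟩
  have hB3supp : ∀ β ∈ B3, β ∈ S.support := fun β hβ =>
    (Finset.mem_filter.1 (Finset.mem_filter.1 (Finset.mem_filter.1 hβ).1).1).1
  set cst : Fin n →₀ ℕ := Finsupp.equivFunOnFinite.symm (fun _ => M3) with hcst
  have hcstval : ∀ i, cst i = M3 := fun i => rfl
  set Aset := (Finset.Iic cst).filter (fun α => degSum α = M3) with hAsetdef
  have hAmem : ∀ α : Fin n →₀ ℕ, degSum α = M3 → α ∈ Aset := by
    intro α hα
    refine Finset.mem_filter.2 ⟨Finset.mem_Iic.2 ?_, hα⟩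
    rw [Finsupp.le_def]
    intro i
    have h1 : α i ≤ degSum α :=
      Finset.single_le_sum (fun j _ => Nat.zero_le (α j)) (Finset.mem_univ i)
    rw [hcstval i]
    omega
  set D := (Aset ×ˢ B3).filter (fun d => coeffOf S d ≠ 0) with hDdef
  have hDne : D.Nonempty := by
    obtain ⟨β₁, hβ₁⟩ := hB3ne
    have hs : β₁ ∈ S.support := hB3supp β₁ hβ₁
    have hm3 : mfun β₁ = M3 := (Finset.mem_filter.1 hβ₁).2
    have hfind : Nat.find (hw β₁ hs) = M3 := by
      rw [hmfun] at hm3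
      simpa [hs] using hm3
    obtain ⟨α, hα1, hα2⟩ := Nat.find_spec (hw β₁ hs)
    exact ⟨(α, β₁), Finset.mem_filter.2
      ⟨Finset.mem_product.2 ⟨hAmem α (by rw [hα1, hfind]), hβ₁⟩, hα2⟩⟩
  obtain ⟨e, heD, hemax⟩ := exists_lt0_max (fun a b => lt0 b a)
    (fun a b => by
      rcases tri a b with h | h | h
      · exact Or.inr (Or.inr h)
      · exact Or.inr (Or.inl h)
      · exact Or.inl h)
    (fun a b c hab hbc => htrans c b a hbc hab) D hDne
  obtain ⟨heP, hce⟩ := Finset.mem_filter.1 heD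
  obtain ⟨he1, he2⟩ := Finset.mem_product.1 heP
  have he2B2 := (Finset.mem_filter.1 he2).1
  have he2B1 := (Finset.mem_filter.1 he2B2).1
  have heL : Lform l e.2 = M1 := (Finset.mem_filter.1 he2B1).2
  have heD2 : degSum e.2 = M2 := (Finset.mem_filter.1 he2B2).2
  have heA : degSum e.1 = M3 := (Finset.mem_filter.1 he1).2
  refine ⟨e, hce, ?_⟩
  intro d hd
  have hd2 : d.2 ∈ S.support := hmem d hd
  have hL : Lform l d.2 ≤ M1 := Finset.le_max' _ _ (Finset.mem_image_of_mem _ hd2)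
  rcases lt_or_eq_of_le hL with h | hLeq
  · exact Or.inr (Or.inl (by rw [heL]; exact h))
  · have hd2B1 : d.2 ∈ B1 := Finset.mem_filter.2 ⟨hd2, hLeq⟩
    have hD2le : degSum d.2 ≤ M2 := Finset.le_max' _ _ (Finset.mem_image_of_mem _ hd2B1)
    rcases lt_or_eq_of_le hD2le with h | hD2eq
    · exact Or.inr (Or.inr ⟨by rw [heL, hLeq], Or.inl (by rw [heD2]; exact h)⟩)
    · have hd2B2 : d.2 ∈ B2 := Finset.mem_filter.2 ⟨hd2B1, hD2eq⟩
      have hdwit : coeffOf S (d.1, d.2) ≠ 0 := by simpa using hd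
      have hfind : Nat.find (hw d.2 hd2) ≤ degSum d.1 :=
        Nat.find_le ⟨d.1, rfl, hdwit⟩
      have hmfd : mfun d.2 = Nat.find (hw d.2 hd2) := by
        rw [hmfun]; exact dif_pos hd2
      have hM3le : M3 ≤ mfun d.2 := Finset.min'_le _ _ (Finset.mem_image_of_mem _ hd2B2)
      have hM3d : M3 ≤ degSum d.1 := by omega
      rcases lt_or_eq_of_le hM3d with h | hM3eq
      · exact Or.inr (Or.inr ⟨by rw [heL, hLeq], Or.inr
          ⟨by rw [heD2, hD2eq], Or.inl (by rw [heA]; exact h)⟩⟩)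
      · have hd2B3 : d.2 ∈ B3 := Finset.mem_filter.2 ⟨hd2B2, by omega⟩
        have hdD : d ∈ D := Finset.mem_filter.2
          ⟨Finset.mem_product.2 ⟨hAmem d.1 hM3eq.symm, hd2B3⟩, hd⟩
        rcases hemax d hdD with rfl | hlt
        · exact Or.inl rfl
        · exact Or.inr (Or.inr ⟨by rw [heL, hLeq], Or.inr
            ⟨by rw [heD2, hD2eq], Or.inr ⟨by rw [heA, ← hM3eq], hlt⟩⟩⟩)


section AuxB
variable {n q : ℕ}

lemma coeffOf_specHom {C : Type} [CommRing C] (Q : Ideal C) (P : Rxz n q C) (d : Expo n q) :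
    coeffOf (specHom Q P) d =
      ((algebraMap (C ⧸ Q) (FractionRing (C ⧸ Q))).comp (Ideal.Quotient.mk Q)) (coeffOf P d) := by
  simp [coeffOf, specHom, MvPolynomial.coeff_map, MvPowerSeries.coeff_map]

lemma coeffOf_specHom_ne_zero_iff {C : Type} [CommRing C]
    {Q : Ideal C} (hQ : Q.IsPrime) (P : Rxz n q C) (d : Expo n q) :
    coeffOf (specHom Q P) d ≠ 0 ↔ coeffOf P d ∉ Q := by
  haveI := hQ
  rw [coeffOf_specHom, RingHom.comp_apply,
    map_ne_zero_iff _ (IsFractionRing.injective (C ⧸ Q) (FractionRing (C ⧸ Q)))]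
  rw [ne_eq, Ideal.Quotient.eq_zero_iff_mem]

lemma specHom_momial' {C : Type} [CommRing C] (Q : Ideal C) (γ : Expo n q) :
    specHom Q (momial' C γ) = momial' (FractionRing (C ⧸ Q)) γ := by
  simp [specHom, momial', MvPolynomial.map_monomial, MvPowerSeries.map_monomial, map_one]

end AuxB


/-- Existence of generic standard bases: for an ideal J of R_C not contained in R(Q),
the set Exp^modQ_≺(J) is stable under addition of ℕ^{n+q}, and J admits a generic
standard basis on V(Q). -/
theorem generic_standard_basis_exists
    (n q : ℕ) (hn : 0 < n) (hq : 0 < q)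
    (C : Type) [CommRing C] [IsDomain C] [Algebra ℚ C]
    (Q : Ideal C) (hQ : Q.IsPrime)
    (l : Fin q → ℕ)
    (lt0 : Expo n q → Expo n q → Prop)
    (hlt0_tri : ∀ a b : Expo n q, lt0 a b ∨ a = b ∨ lt0 b a)
    (hlt0_trans : ∀ a b c : Expo n q, lt0 a b → lt0 b c → lt0 a c)
    (hlt0_wf : WellFounded lt0)
    (hlt0_add : ∀ a b c : Expo n q, lt0 a b → lt0 (a + c) (b + c))
    (J : Ideal (Rxz n q C))
    (hJ : ∃ P ∈ J, ¬ allCoeffIn Q P) :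
    (∀ d ∈ expModQSet l lt0 Q J, ∀ γ : Expo n q, d + γ ∈ expModQSet l lt0 Q J) ∧
    ∃ (r : ℕ) (G : Fin r → Rxz n q C) (e : Fin r → Expo n q),
      (∀ j, G j ∈ J ∧ ¬ allCoeffIn Q (G j) ∧
        IsPrivExp (PrecL l lt0) (specHom Q (G j)) (e j)) ∧
      expModQSet l lt0 Q J = ⋃ j, {v | inShift (e j) v} := by
  have stab : ∀ d ∈ expModQSet l lt0 Q J, ∀ γ : Expo n q, d + γ ∈ expModQSet l lt0 Q J := by
    rintro d hd γ
    obtain ⟨P, hPJ, hPQ, hPriv⟩ := hd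
    have hpriv2 : IsPrivExp (PrecL l lt0) (specHom Q (momial' C γ * P)) (γ + d) := by
      rw [map_mul, specHom_momial']
      exact isPrivExp_momial_mul' l lt0 hlt0_add γ d _ hPriv
    refine ⟨momial' C γ * P, Ideal.mul_mem_left J _ hPJ, ?_, by rwa [add_comm d γ]⟩
    intro hall
    have h1 := hpriv2.1
    rw [coeffOf_specHom_ne_zero_iff hQ] at h1
    exact h1 (hall _)
  refine ⟨stab, ?_⟩
  set E := expModQSet l lt0 Q J with hE
  have hEpwo : E.IsPWO := by
    have h1 : (Set.univ : Set (Fin n →₀ ℕ)).IsPWO := Set.isPWO_of_wellQuasiOrderedLE _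
    have h2 : (Set.univ : Set (Fin q →₀ ℕ)).IsPWO := Set.isPWO_of_wellQuasiOrderedLE _
    have h3 := h1.prod h2
    rw [Set.univ_prod_univ] at h3
    exact h3.mono (Set.subset_univ E)
  have hshift : ∀ a b : Expo n q, inShift a b ↔ a ≤ b := by
    intro a b
    simp only [inShift]
    exact le_iff_exists_add.symm
  set M := {m : Expo n q | m ∈ E ∧ ∀ v ∈ E, v ≤ m → v = m} with hM
  have hMsub : M ⊆ E := fun m hm => hm.1
  have hcov : ∀ v ∈ E, ∃ m ∈ M, m ≤ v := by
    intro v hv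
    have hswf : (E ∩ Set.Iic v).IsWF := (hEpwo.mono Set.inter_subset_left).isWF
    have hsne : (E ∩ Set.Iic v).Nonempty := ⟨v, hv, le_refl v⟩
    have hminv : hswf.min hsne ≤ v := (hswf.min_mem hsne).2
    refine ⟨hswf.min hsne, ⟨(hswf.min_mem hsne).1, ?_⟩, hminv⟩
    intro w hw hwle
    have hws : w ∈ E ∩ Set.Iic v := ⟨hw, le_trans hwle hminv⟩
    exact (lt_or_eq_of_le hwle).resolve_left (hswf.not_lt_min hsne hws)
  have hanti : IsAntichain (· ≤ ·) M := by
    intro a ha b hb hab hle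
    exact hab (hb.2 a ha.1 hle)
  have hMfin : M.Finite := hanti.finite_of_partiallyWellOrderedOn (hEpwo.mono hMsub)
  set F := hMfin.toFinset with hF
  refine ⟨F.card, ?_⟩
  set evec : Fin F.card → Expo n q := fun j => (F.equivFin.symm j : Expo n q) with hevec
  have hevE : ∀ j, evec j ∈ E := by
    intro j
    have hmem : (F.equivFin.symm j : Expo n q) ∈ F := (F.equivFin.symm j).2
    exact hMsub (hMfin.mem_toFinset.1 hmem)
  have hch : ∀ j, ∃ P, P ∈ J ∧ ¬ allCoeffIn Q P ∧
      IsPrivExp (PrecL l lt0) (specHom Q P) (evec j) := by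
    intro j
    obtain ⟨P, hPJ, h2, h3⟩ := hevE j
    exact ⟨P, hPJ, h2, h3⟩
  choose G hG1 hG2 hG3 using hch
  refine ⟨G, evec, fun j => ⟨hG1 j, hG2 j, hG3 j⟩, ?_⟩
  ext v
  simp only [Set.mem_iUnion, Set.mem_setOf_eq]
  constructor
  · intro hv
    obtain ⟨m, hmM, hmle⟩ := hcov v hv
    have hmF : m ∈ F := hMfin.mem_toFinset.2 hmM
    refine ⟨F.equivFin ⟨m, hmF⟩, ?_⟩
    rw [hshift]
    have hee : evec (F.equivFin ⟨m, hmF⟩) = m := by simp [hevec]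
    rw [hee]
    exact hmle
  · rintro ⟨j, γ, rfl⟩
    exact stab _ (hevE j) γ


end
end

section
/- Correctness of the formal elimination of the local variables (Proposition of Section 4, version formelle de l'algorithme de Oaku). Let J be an ideal of k[[x]][s] such that J ∩ k[s] ≠ (0), and let b ∈ k[s] be the monic generator of J ∩ k[s]. Let J̄ be the ideal of k̄[[x]][s] generated by the image of J, let b₀ ∈ k̄[s] be the monic generator of the ideal {g(0,s) : g ∈ J̄} of k̄[s] (this ideal is nonzero because it contains b), and let s_1,…,s_m be the distinct roots of b₀ in k̄. For each i = 1,…,m, let l_i be the least natural number l for which there exists h ∈ k̄[[x]][s] with h·(s−s_i)^l ∈ J̄ and h(0,s_i) ≠ 0. Then, as elements of k̄[s], b = ∏_{i=1}^m (s−s_i)^{l_i}; in particular this product has all its coefficients in k, and it generates the ideal J̄ ∩ k̄[s] of k̄[s]. -/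
open Classical Polynomial

noncomputable section

/-- The ring A[[x]][s], polynomials in one variable s over A[[x]]. -/
abbrev RS (n : ℕ) (A : Type) [CommRing A] := Polynomial (MvPowerSeries (Fin n) A)

/-- The inclusion A[s] → A[[x]][s], applied coefficientwise. -/
def toRS (n : ℕ) (A : Type) [CommRing A] : Polynomial A →+* RS n A :=
  Polynomial.mapRingHom (MvPowerSeries.C : A →+* MvPowerSeries (Fin n) A)

/-- The evaluation g ↦ g(0, s) : A[[x]][s] → A[s], applying the constant-term map
A[[x]] → A to each coefficient. -/
def evAtZero (n : ℕ) (A : Type) [CommRing A] : RS n A →+* Polynomial A :=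
  Polynomial.mapRingHom (MvPowerSeries.constantCoeff : MvPowerSeries (Fin n) A →+* A)

/-- Coefficientwise extension of scalars A[[x]][s] → B[[x]][s] along a ring map A → B. -/
def extScalars (n : ℕ) {A B : Type} [CommRing A] [CommRing B] (f : A →+* B) :
    RS n A →+* RS n B :=
  Polynomial.mapRingHom (MvPowerSeries.map f : MvPowerSeries (Fin n) A →+* MvPowerSeries (Fin n) B)

namespace Oaku

variable {n : ℕ} {A B C' : Type} [CommRing A] [CommRing B] [CommRing C']

lemma ev_toRS (p : Polynomial A) : evAtZero n A (toRS n A p) = p := by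
  simp only [evAtZero, toRS, coe_mapRingHom, Polynomial.map_map]
  rw [show ((MvPowerSeries.constantCoeff (σ := Fin n) (R := A))).comp ((MvPowerSeries.C (σ := Fin n) (R := A)))
      = RingHom.id A from RingHom.ext fun a => by simp, Polynomial.map_id]

lemma extScalars_toRS (f : A →+* B) (p : Polynomial A) :
    extScalars n f (toRS n A p) = toRS n B (p.map f) := by
  simp only [extScalars, toRS, coe_mapRingHom, Polynomial.map_map]
  rw [show (MvPowerSeries.map (σ := Fin n) f).comp ((MvPowerSeries.C (σ := Fin n) (R := A)))
      = ((MvPowerSeries.C (σ := Fin n) (R := B))).comp f from RingHom.ext fun a => by simp [MvPowerSeries.map_C]]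

lemma ev_extScalars (f : A →+* B) (g : RS n A) :
    evAtZero n B (extScalars n f g) = (evAtZero n A g).map f := by
  simp only [evAtZero, extScalars, coe_mapRingHom, Polynomial.map_map]
  rw [show ((MvPowerSeries.constantCoeff (σ := Fin n) (R := B))).comp (MvPowerSeries.map (σ := Fin n) f)
      = f.comp ((MvPowerSeries.constantCoeff (σ := Fin n) (R := A))) from
    RingHom.ext fun u => by simp [MvPowerSeries.constantCoeff_map]]

lemma toRS_X_sub_C (c : A) :
    toRS n A (X - Polynomial.C c) = X - Polynomial.C ((MvPowerSeries.C (σ := Fin n) (R := A)) c) := by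
  simp [toRS]

lemma extScalars_comp (f : A →+* B) (g : B →+* C') :
    (extScalars n g).comp (extScalars n f) = extScalars n (g.comp f) := by
  have h : (MvPowerSeries.map (σ := Fin n) g).comp (MvPowerSeries.map (σ := Fin n) f)
      = MvPowerSeries.map (σ := Fin n) (g.comp f) :=
    RingHom.ext fun u => MvPowerSeries.ext fun d => by
      simp [MvPowerSeries.coeff_map, RingHom.comp_apply]
  rw [extScalars, extScalars, extScalars, ← h, Polynomial.mapRingHom_comp]

lemma extScalars_X_sub_C (f : A →+* B) (c : A) :
    extScalars n f (X - Polynomial.C ((MvPowerSeries.C (σ := Fin n) (R := A)) c))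
      = X - Polynomial.C ((MvPowerSeries.C (σ := Fin n) (R := B)) (f c)) := by
  simp [extScalars, MvPowerSeries.map_C]

lemma extScalars_id : extScalars n (RingHom.id A) = RingHom.id (RS n A) := by
  have h : MvPowerSeries.map (σ := Fin n) (RingHom.id A) = RingHom.id (MvPowerSeries (Fin n) A) :=
    RingHom.ext fun u => MvPowerSeries.ext fun d => by simp [MvPowerSeries.coeff_map]
  rw [extScalars, h, Polynomial.mapRingHom_id]

/-- Evaluation at (0, c). -/
def eps (n : ℕ) (A : Type) [CommRing A] (c : A) : RS n A →+* A :=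
  (Polynomial.evalRingHom c).comp (evAtZero n A)

lemma eps_apply (c : A) (g : RS n A) : eps n A c g = (evAtZero n A g).eval c := rfl

lemma eps_toRS (c : A) (p : Polynomial A) : eps n A c (toRS n A p) = p.eval c := by
  rw [eps_apply, ev_toRS]


section FieldCase

variable {K : Type} [Field K]

lemma eps_surjective (c : K) : Function.Surjective (eps n K c) := fun a =>
  ⟨Polynomial.C ((MvPowerSeries.C (σ := Fin n) (R := K)) a), by
    rw [show (Polynomial.C ((MvPowerSeries.C (σ := Fin n) (R := K)) a) : RS n K)
        = toRS n K (Polynomial.C a) from by simp [toRS], eps_toRS]; simp⟩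

lemma ker_eps_isMaximal (c : K) : (RingHom.ker (eps n K c)).IsMaximal :=
  RingHom.ker_isMaximal_of_surjective _ (eps_surjective c)

lemma constantCoeff_eval (c : K) (g : RS n K) :
    (MvPowerSeries.constantCoeff (σ := Fin n) (R := K)) (g.eval ((MvPowerSeries.C (σ := Fin n) (R := K)) c)) = eps n K c g := by
  rw [eps_apply, evAtZero, coe_mapRingHom, Polynomial.eval_map, ← Polynomial.eval₂_at_apply,
    MvPowerSeries.constantCoeff_C]

set_option maxHeartbeats 1000000 in
lemma maximal_eq_ker_eps (M : Ideal (RS n K)) (hM : M.IsMaximal) (c : K)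
    (hc : (X : RS n K) - Polynomial.C ((MvPowerSeries.C (σ := Fin n) (R := K)) c) ∈ M) :
    M = RingHom.ker (eps n K c) := by
  have hle : RingHom.ker (eps n K c) ≤ M := by
    intro g hg
    rw [RingHom.mem_ker] at hg
    -- g - C (g.eval (C c)) ∈ M
    obtain ⟨w, hw⟩ := Polynomial.X_sub_C_dvd_sub_C_eval
      (a := (MvPowerSeries.C (σ := Fin n) (R := K)) c) (p := g)
    have h1 : g - Polynomial.C (g.eval ((MvPowerSeries.C (σ := Fin n) (R := K)) c)) ∈ M := by
      rw [hw]; exact M.mul_mem_right _ hc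
    -- the constant term r lies in M
    set r := g.eval ((MvPowerSeries.C (σ := Fin n) (R := K)) c) with hr
    have hr0 : (MvPowerSeries.constantCoeff (σ := Fin n) (R := K)) r = 0 := by
      rw [hr, constantCoeff_eval, hg]
    -- the ring hom ψ : MvPowerSeries → RS/M
    haveI := hM
    letI : Field (RS n K ⧸ M) := Ideal.Quotient.field M
    let φ : RS n K →+* (RS n K ⧸ M) := Ideal.Quotient.mk M
    let ψ : MvPowerSeries (Fin n) K →+* (RS n K ⧸ M) := φ.comp Polynomial.C
    have hφψ : ∀ u : RS n K, φ u = ψ (u.eval ((MvPowerSeries.C (σ := Fin n) (R := K)) c)) := by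
      have hhom : φ = ψ.comp (Polynomial.evalRingHom ((MvPowerSeries.C (σ := Fin n) (R := K)) c)) := by
        apply Polynomial.ringHom_ext
        · intro a; simp [φ, ψ]
        · show φ X = ψ (Polynomial.eval _ X)
          rw [Polynomial.eval_X]
          show φ X = φ (Polynomial.C ((MvPowerSeries.C (σ := Fin n) (R := K)) c))
          rw [Ideal.Quotient.mk_eq_mk_iff_sub_mem]
          exact hc
      intro u
      rw [hhom]
      rfl
    have hψsurj : Function.Surjective ψ := by
      intro y
      obtain ⟨u, rfl⟩ := Ideal.Quotient.mk_surjective (I := M) y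
      exact ⟨u.eval ((MvPowerSeries.C (σ := Fin n) (R := K)) c), (hφψ u).symm⟩
    have hkψ : (RingHom.ker ψ).IsMaximal := RingHom.ker_isMaximal_of_surjective _ hψsurj
    have hker : RingHom.ker ψ = IsLocalRing.maximalIdeal (MvPowerSeries (Fin n) K) :=
      IsLocalRing.eq_maximalIdeal hkψ
    have hrM : r ∈ RingHom.ker ψ := by
      rw [hker, IsLocalRing.mem_maximalIdeal, mem_nonunits_iff]
      intro hunit
      have := hunit.map ((MvPowerSeries.constantCoeff (σ := Fin n) (R := K)))
      rw [hr0] at this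
      exact not_isUnit_zero this
    have hCr : Polynomial.C r ∈ M := by
      have : φ (Polynomial.C r) = 0 := hrM
      rwa [← Ideal.Quotient.eq_zero_iff_mem]
    have := M.add_mem h1 hCr
    simpa using this
  exact ((ker_eps_isMaximal c).eq_of_le hM.ne_top hle).symm

end FieldCase


section Descent

variable {k K : Type} [Field k] [Field K] [Algebra k K]

set_option maxHeartbeats 1000000 in
lemma descent (J : Ideal (RS n k)) (z : RS n k)
    (hz : extScalars n (algebraMap k K) z ∈ Ideal.map (extScalars n (algebraMap k K)) J) :
    z ∈ J := by
  classical
  obtain ⟨π, hπ0⟩ := LinearMap.exists_leftInverse_of_injective (Algebra.linearMap k K)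
    (LinearMap.ker_eq_bot.mpr (algebraMap k K).injective)
  have hπ : ∀ a : k, π (algebraMap k K a) = a := fun a => by
    have := LinearMap.congr_fun hπ0 a
    simpa using this
  set f := algebraMap k K with hf
  -- coefficientwise retraction on power series
  let Ps : MvPowerSeries (Fin n) K →ₗ[k] MvPowerSeries (Fin n) k :=
    { toFun := fun F d => π (F d)
      map_add' := fun F G => by funext d; exact π.map_add _ _
      map_smul' := fun a F => by funext d; exact π.map_smul a _ }
  have hPs_coeff : ∀ (F : MvPowerSeries (Fin n) K) d,
      MvPowerSeries.coeff d (Ps F) = π (MvPowerSeries.coeff d F) := fun F d => rfl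
  have hPs_mul : ∀ (u : MvPowerSeries (Fin n) k) (F : MvPowerSeries (Fin n) K),
      Ps (MvPowerSeries.map (σ := Fin n) f u * F) = u * Ps F := by
    intro u F
    apply MvPowerSeries.ext
    intro d
    rw [hPs_coeff, MvPowerSeries.coeff_mul, MvPowerSeries.coeff_mul, map_sum]
    refine Finset.sum_congr rfl fun x _ => ?_
    rw [MvPowerSeries.coeff_map, hPs_coeff]
    have : f (MvPowerSeries.coeff x.1 u) * MvPowerSeries.coeff x.2 F
        = MvPowerSeries.coeff x.1 u • MvPowerSeries.coeff x.2 F := (Algebra.smul_def _ _).symm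
    rw [this, π.map_smul, smul_eq_mul]
  have hPs_f : ∀ u : MvPowerSeries (Fin n) k, Ps (MvPowerSeries.map (σ := Fin n) f u) = u := by
    intro u
    apply MvPowerSeries.ext
    intro d
    rw [hPs_coeff, MvPowerSeries.coeff_map, hπ]
  -- polynomial-level retraction
  let Pp : RS n K → RS n k := fun g => g.sum fun i a => Polynomial.monomial i (Ps a)
  have hPp_coeff : ∀ (g : RS n K) (j : ℕ), (Pp g).coeff j = Ps (g.coeff j) := by
    intro g j
    rw [show Pp g = g.sum fun i a => Polynomial.monomial i (Ps a) from rfl]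
    rw [Polynomial.sum, Polynomial.finset_sum_coeff]
    simp only [Polynomial.coeff_monomial]
    rw [Finset.sum_ite_eq' g.support j (fun i => Ps (g.coeff i))]
    by_cases hj : j ∈ g.support
    · simp [hj]
    · simp only [hj, if_false]
      rw [Polynomial.notMem_support_iff.mp hj, map_zero]
  have hPp_add : ∀ g g' : RS n K, Pp (g + g') = Pp g + Pp g' := by
    intro g g'
    apply Polynomial.ext
    intro j
    simp [hPp_coeff, Polynomial.coeff_add]
  set E := extScalars n f with hE
  have hPp_mul : ∀ (u : RS n k) (g : RS n K), Pp (E u * g) = u * Pp g := by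
    intro u g
    apply Polynomial.ext
    intro j
    rw [hPp_coeff, Polynomial.coeff_mul, Polynomial.coeff_mul, map_sum]
    refine Finset.sum_congr rfl fun x _ => ?_
    rw [hPp_coeff]
    have hcoe : (E u).coeff x.1 = MvPowerSeries.map (σ := Fin n) f (u.coeff x.1) := by
      rw [hE, extScalars, Polynomial.coe_mapRingHom, Polynomial.coeff_map]
    rw [hcoe, hPs_mul]
  have hPp_E : ∀ u : RS n k, Pp (E u) = u := by
    intro u
    apply Polynomial.ext
    intro j
    rw [hPp_coeff]
    have hcoe : (E u).coeff j = MvPowerSeries.map (σ := Fin n) f (u.coeff j) := by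
      rw [hE, extScalars, Polynomial.coe_mapRingHom, Polynomial.coeff_map]
    rw [hcoe, hPs_f]
  -- now use a finite representation of the membership
  rw [Ideal.map, Ideal.span] at hz
  rw [Submodule.mem_span_set] at hz
  obtain ⟨cf, hsupp, hsum⟩ := hz
  have hz' : z = Pp (E z) := (hPp_E z).symm
  rw [hz', ← hsum]
  rw [Finsupp.sum]
  have hrw : Pp (∑ v ∈ cf.support, cf v • v) = ∑ v ∈ cf.support, Pp (cf v * v) := by
    classical
    induction cf.support using Finset.induction with
    | empty => simp [Pp]
    | insert _ _ hne ih =>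
        rw [Finset.sum_insert hne, Finset.sum_insert hne, hPp_add, ih, smul_eq_mul]
  rw [hrw]
  apply Ideal.sum_mem
  intro v hv
  obtain ⟨u, hu, huv⟩ := hsupp hv
  rw [← huv, mul_comm, hPp_mul]
  exact J.mul_mem_right _ hu

end Descent


section Fixed

lemma fixed_mem_range {k : Type} [Field k] [CharZero k] (a : AlgebraicClosure k)
    (hfix : ∀ σ : AlgebraicClosure k ≃ₐ[k] AlgebraicClosure k, σ a = a) :
    a ∈ (algebraMap k (AlgebraicClosure k)).range := by
  have hint : IsIntegral k a := Algebra.IsIntegral.isIntegral a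
  rw [← minpoly.natDegree_eq_one_iff]
  set p := minpoly k a with hp
  set q := p.map (algebraMap k (AlgebraicClosure k)) with hq
  have hpne : p ≠ 0 := minpoly.ne_zero hint
  have hqne : q ≠ 0 := Polynomial.map_ne_zero hpne
  have hsep : q.Separable := ((minpoly.irreducible hint).separable).map
  have hroots_eq : ∀ y ∈ q.roots, y = a := by
    intro y hy
    have h2 : q.eval y = 0 := ((Polynomial.mem_roots')).mp hy |>.2
    have hy' : Polynomial.aeval y p = 0 := by
      rw [hq, Polynomial.eval_map, ← Polynomial.aeval_def] at h2
      exact h2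
    have hmin : minpoly k y = p :=
      (minpoly.eq_of_irreducible_of_monic (minpoly.irreducible hint) hy'
        (minpoly.monic hint)).symm
    have horb : y ∈ MulAction.orbit ((AlgebraicClosure k) ≃ₐ[k] (AlgebraicClosure k)) a :=
      (Normal.minpoly_eq_iff_mem_orbit (F := k) (E := AlgebraicClosure k)).mp (by rw [hmin, hp])
    obtain ⟨σ, hσ⟩ := horb
    rw [← hσ]
    show σ • a = a
    rw [AlgEquiv.smul_def, hfix σ]
  have hmem : a ∈ q.roots := by
    rw [Polynomial.mem_roots']
    refine ⟨hqne, ?_⟩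
    show q.eval a = 0
    rw [hq, Polynomial.eval_map, ← Polynomial.aeval_def]
    exact minpoly.aeval k a
  have hnodup : q.roots.Nodup := Polynomial.nodup_roots hsep
  have hrepl : q.roots = Multiset.replicate (Multiset.card q.roots) a :=
    Multiset.eq_replicate_card.mpr hroots_eq
  have hcount := Multiset.nodup_iff_count_le_one.mp hnodup a
  rw [hrepl, Multiset.count_replicate_self] at hcount
  have hcard_ge : 0 < Multiset.card q.roots := Multiset.card_pos.mpr
    (fun h => Multiset.notMem_zero a (h ▸ hmem))
  have hdeg : Multiset.card q.roots = q.natDegree :=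
    Polynomial.splits_iff_card_roots.mp (IsAlgClosed.splits q)
  have hq1 : q.natDegree = 1 := by omega
  rw [hq, Polynomial.natDegree_map] at hq1
  exact hq1

end Fixed

end Oaku

open Oaku in
set_option maxHeartbeats 2000000 in
/-- Correctness of the formal elimination of the local variables (Proposition of
Section 4): if b is the monic generator of J ∩ k[s] ≠ (0), J̄ the ideal of k̄[[x]][s]
generated by J, b₀ the monic generator of {g(0,s) : g ∈ J̄} with distinct roots
s_1, …, s_m, and l_i the least l such that some h ∈ k̄[[x]][s] satisfies
h·(s−s_i)^l ∈ J̄ and h(0,s_i) ≠ 0, then b = ∏_i (s−s_i)^{l_i} in k̄[s]; in particular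
this product has all its coefficients in k and generates J̄ ∩ k̄[s]. -/
theorem oaku_formal_elimination
    (n : ℕ) (hn : 0 < n) (k : Type) [Field k] [CharZero k]
    (J : Ideal (RS n k))
    (hJne : Ideal.comap (toRS n k) J ≠ ⊥)
    (b : Polynomial k) (hbMonic : b.Monic)
    (hb : Ideal.comap (toRS n k) J = Ideal.span {b})
    (Jbar : Ideal (RS n (AlgebraicClosure k)))
    (hJbar : Jbar = Ideal.map (extScalars n (algebraMap k (AlgebraicClosure k))) J)
    (b0 : Polynomial (AlgebraicClosure k)) (hb0Monic : b0.Monic)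
    (hb0 : Ideal.map (evAtZero n (AlgebraicClosure k)) Jbar = Ideal.span {b0})
    (m : ℕ) (sm : Fin m → AlgebraicClosure k) (hsm : Function.Injective sm)
    (hroots : ∀ c : AlgebraicClosure k, b0.IsRoot c ↔ ∃ i, sm i = c)
    (li : Fin m → ℕ)
    (hli : ∀ i, IsLeast {l : ℕ | ∃ h : RS n (AlgebraicClosure k),
        h * (X - C ((MvPowerSeries.C : AlgebraicClosure k →+* MvPowerSeries (Fin n) (AlgebraicClosure k)) (sm i))) ^ l ∈ Jbar ∧
        Polynomial.eval (sm i) (evAtZero n (AlgebraicClosure k) h) ≠ 0} (li i)) :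
    Polynomial.map (algebraMap k (AlgebraicClosure k)) b
        = ∏ i, (X - C (sm i)) ^ (li i) ∧
    (∀ j : ℕ, (∏ i, (X - C (sm i)) ^ (li i)).coeff j ∈
        (algebraMap k (AlgebraicClosure k)).range) ∧
    Ideal.comap (toRS n (AlgebraicClosure k)) Jbar
        = Ideal.span {∏ i, (X - C (sm i)) ^ (li i)} := by
  classical
  set f : k →+* AlgebraicClosure k := algebraMap k (AlgebraicClosure k) with hfdef
  set P : Polynomial (AlgebraicClosure k) := ∏ i, (X - C (sm i)) ^ (li i) with hPdef
  -- Step A : b ∈ J, and its image in Jbar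
  have hbJ : toRS n k b ∈ J := by
    have : b ∈ Ideal.comap (toRS n k) J := by
      rw [hb]; exact Ideal.mem_span_singleton_self b
    exact this
  have hbbar : toRS n (AlgebraicClosure k) (b.map f) ∈ Jbar := by
    rw [← Oaku.extScalars_toRS f b, hJbar]
    exact Ideal.mem_map_of_mem _ hbJ
  -- Step D : an element of Jbar whose value at x = 0 is b0
  have hevsurj : Function.Surjective (evAtZero n (AlgebraicClosure k)) := by
    have hc : Function.Surjective ((MvPowerSeries.constantCoeff (σ := Fin n) (R := (AlgebraicClosure k)))) :=
      fun a => ⟨(MvPowerSeries.C (σ := Fin n) (R := (AlgebraicClosure k))) a, MvPowerSeries.constantCoeff_C a⟩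
    exact Polynomial.map_surjective _ hc
  have hg0 : ∃ g, g ∈ Jbar ∧ evAtZero n (AlgebraicClosure k) g = b0 := by
    have : b0 ∈ Ideal.map (evAtZero n (AlgebraicClosure k)) Jbar := by
      rw [hb0]; exact Ideal.mem_span_singleton_self b0
    exact (Ideal.mem_map_iff_of_surjective _ hevsurj).mp this
  -- description of toRS P
  have htoRSP : toRS n (AlgebraicClosure k) P
      = ∏ i, ((X : RS n (AlgebraicClosure k))
          - Polynomial.C ((MvPowerSeries.C (σ := Fin n) (R := (AlgebraicClosure k))) (sm i))) ^ (li i) := by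
    rw [hPdef, map_prod]
    exact Finset.prod_congr rfl fun i _ => by rw [map_pow, Oaku.toRS_X_sub_C]
  -- Step E : toRS P ∈ Jbar
  have hPJ : toRS n (AlgebraicClosure k) P ∈ Jbar := by
    by_contra hP
    have hQ : Jbar.colon (Ideal.span {toRS n (AlgebraicClosure k) P}) ≠ ⊤ := by
      intro htop
      have h1 : (1 : RS n (AlgebraicClosure k)) ∈
          Jbar.colon (Ideal.span {toRS n (AlgebraicClosure k) P}) := htop ▸ Submodule.mem_top
      rw [Ideal.mem_colon_span_singleton, one_mul] at h1
      exact hP h1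
    obtain ⟨M, hMmax, hQM⟩ := Ideal.exists_le_maximal _ hQ
    have hmemQ : ∀ u, u * toRS n (AlgebraicClosure k) P ∈ Jbar → u ∈ M := fun u hu =>
      hQM (Ideal.mem_colon_span_singleton.mpr hu)
    by_cases hbM : toRS n (AlgebraicClosure k) (b.map f) ∈ M
    · -- find a root c of b.map f with X - C c ∈ M
      have hbsplit : b.map f = (((b.map f).roots).map (fun a => X - C a)).prod :=
        (IsAlgClosed.splits _).eq_prod_roots_of_monic (hbMonic.map f)
      have hfact : toRS n (AlgebraicClosure k) (b.map f)
          = (((b.map f).roots).map (fun a => (X : RS n (AlgebraicClosure k))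
              - Polynomial.C ((MvPowerSeries.C (σ := Fin n) (R := (AlgebraicClosure k))) a))).prod := by
        conv_lhs => rw [hbsplit]
        rw [map_multiset_prod, Multiset.map_map]
        exact congrArg Multiset.prod (Multiset.map_congr rfl fun a _ => Oaku.toRS_X_sub_C a)
      haveI hprime := hMmax.isPrime
      rw [hfact] at hbM
      obtain ⟨w, hw, hwM⟩ := (hprime.multiset_prod_mem_iff_exists_mem _).mp hbM
      obtain ⟨c, hcroot, rfl⟩ := Multiset.mem_map.mp hw
      have hMker := Oaku.maximal_eq_ker_eps M hMmax c hwM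
      by_cases hc0 : b0.eval c = 0
      · obtain ⟨i, hi⟩ := (hroots c).mp hc0
        obtain ⟨h, hh1, hh2⟩ := (hli i).1
        have hhM : h ∈ M := by
          apply hmemQ h
          rw [htoRSP, ← Finset.mul_prod_erase Finset.univ _ (Finset.mem_univ i), ← mul_assoc]
          exact Ideal.mul_mem_right _ _ hh1
        rw [hMker, RingHom.mem_ker, Oaku.eps_apply, ← hi] at hhM
        exact hh2 hhM
      · obtain ⟨g, hgJ, hgev⟩ := hg0
        have hgM : g ∈ M := hmemQ g (Ideal.mul_mem_right _ _ hgJ)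
        rw [hMker, RingHom.mem_ker, Oaku.eps_apply, hgev] at hgM
        exact hc0 hgM
    · exact hbM (hmemQ _ (Ideal.mul_mem_right _ _ hbbar))
  -- Step F : comap toRS Jbar = span {P}
  have hcomap : Ideal.comap (toRS n (AlgebraicClosure k)) Jbar = Ideal.span {P} := by
    apply le_antisymm
    · intro q hq
      rw [Ideal.mem_comap] at hq
      rw [Ideal.mem_span_singleton]
      by_cases hq0 : q = 0
      · rw [hq0]; exact dvd_zero P
      rw [hPdef]
      apply Finset.prod_dvd_of_coprime
      · intro i hi j hj hij
        exact ((Polynomial.pairwise_coprime_X_sub_C hsm) hij).pow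
      · intro i _
        have hfac := Polynomial.pow_mul_divByMonic_rootMultiplicity_eq q (sm i)
        have hvne := Polynomial.eval_divByMonic_pow_rootMultiplicity_ne_zero (sm i) hq0
        have hmem : Polynomial.rootMultiplicity (sm i) q ∈ {l : ℕ | ∃ h : RS n (AlgebraicClosure k),
            h * (X - C ((MvPowerSeries.C (σ := Fin n) (R := (AlgebraicClosure k))) (sm i))) ^ l ∈ Jbar ∧
            Polynomial.eval (sm i) (evAtZero n (AlgebraicClosure k) h) ≠ 0} := by
          refine ⟨toRS n (AlgebraicClosure k)
            (q /ₘ (X - C (sm i)) ^ Polynomial.rootMultiplicity (sm i) q), ?_, ?_⟩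
          · have heqq : toRS n (AlgebraicClosure k)
                (q /ₘ (X - C (sm i)) ^ Polynomial.rootMultiplicity (sm i) q)
                  * (X - Polynomial.C ((MvPowerSeries.C (σ := Fin n) (R := (AlgebraicClosure k))) (sm i)))
                    ^ Polynomial.rootMultiplicity (sm i) q
                = toRS n (AlgebraicClosure k) q := by
              rw [← Oaku.toRS_X_sub_C, ← map_pow, ← map_mul, mul_comm, hfac]
            rw [heqq]
            exact hq
          · rw [Oaku.ev_toRS]
            exact hvne
        have hle := (hli i).2 hmem
        exact dvd_trans (pow_dvd_pow _ hle) (Polynomial.pow_rootMultiplicity_dvd q (sm i))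
    · rw [Ideal.span_le, Set.singleton_subset_iff]
      rw [SetLike.mem_coe, Ideal.mem_comap]
      exact hPJ
  -- Galois invariance
  have hstab : ∀ (σ : AlgebraicClosure k ≃ₐ[k] AlgebraicClosure k) z, z ∈ Jbar →
      extScalars n σ.toAlgHom.toRingHom z ∈ Jbar := by
    intro σ z hz
    rw [hJbar] at hz ⊢
    have h1 := Ideal.mem_map_of_mem (extScalars n σ.toAlgHom.toRingHom) hz
    rw [Ideal.map_map, Oaku.extScalars_comp] at h1
    have h2 : σ.toAlgHom.toRingHom.comp f = f := RingHom.ext fun a => σ.commutes a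
    rwa [h2] at h1
  have hmapJbar : ∀ σ : AlgebraicClosure k ≃ₐ[k] AlgebraicClosure k,
      Ideal.map (extScalars n σ.toAlgHom.toRingHom) Jbar = Jbar := by
    intro σ
    apply le_antisymm
    · rw [Ideal.map_le_iff_le_comap]; intro z hz; exact hstab σ z hz
    · intro z hz
      have hz' := hstab σ.symm z hz
      have hcancel : extScalars n σ.toAlgHom.toRingHom
          (extScalars n σ.symm.toAlgHom.toRingHom z) = z := by
        rw [← RingHom.comp_apply, Oaku.extScalars_comp]
        have hcomp : σ.toAlgHom.toRingHom.comp σ.symm.toAlgHom.toRingHom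
            = RingHom.id (AlgebraicClosure k) := RingHom.ext fun a => σ.apply_symm_apply a
        rw [hcomp, Oaku.extScalars_id, RingHom.id_apply]
      rw [← hcancel]
      exact Ideal.mem_map_of_mem _ hz'
  have hevσ : ∀ σ : AlgebraicClosure k ≃ₐ[k] AlgebraicClosure k,
      (Polynomial.mapRingHom σ.toAlgHom.toRingHom).comp (evAtZero n (AlgebraicClosure k))
        = (evAtZero n (AlgebraicClosure k)).comp (extScalars n σ.toAlgHom.toRingHom) := by
    intro σ
    apply RingHom.ext
    intro g
    simp only [RingHom.comp_apply, Polynomial.coe_mapRingHom]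
    rw [Oaku.ev_extScalars]
  have hb0σ : ∀ σ : AlgebraicClosure k ≃ₐ[k] AlgebraicClosure k,
      b0.map σ.toAlgHom.toRingHom = b0 := by
    intro σ
    have h2 : Ideal.map (Polynomial.mapRingHom σ.toAlgHom.toRingHom) (Ideal.span {b0})
        = Ideal.span {b0.map σ.toAlgHom.toRingHom} := by
      rw [Ideal.map_span, Set.image_singleton, Polynomial.coe_mapRingHom]
    have h1 : Ideal.span {b0.map σ.toAlgHom.toRingHom} = Ideal.span {b0} := by
      rw [← h2, ← hb0, Ideal.map_map, hevσ σ, ← Ideal.map_map, hmapJbar σ, hb0]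
    exact Polynomial.eq_of_monic_of_associated (hb0Monic.map _) hb0Monic
      (Ideal.span_singleton_eq_span_singleton.mp h1)
  have hπex : ∀ (σ : AlgebraicClosure k ≃ₐ[k] AlgebraicClosure k) (i : Fin m),
      ∃ i', sm i' = σ (sm i) := by
    intro σ i
    apply (hroots _).mp
    show b0.eval (σ (sm i)) = 0
    conv_lhs => rw [← hb0σ σ]
    rw [Polynomial.eval_map,
      show σ (sm i) = σ.toAlgHom.toRingHom (sm i) from rfl, Polynomial.eval₂_at_apply]
    have hz : b0.eval (sm i) = 0 := (hroots (sm i)).mpr ⟨i, rfl⟩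
    rw [hz, map_zero]
  set S : AlgebraicClosure k → Set ℕ := fun c => {l : ℕ | ∃ h : RS n (AlgebraicClosure k),
      h * (X - C ((MvPowerSeries.C (σ := Fin n) (R := (AlgebraicClosure k))) c)) ^ l ∈ Jbar ∧
      Polynomial.eval c (evAtZero n (AlgebraicClosure k) h) ≠ 0} with hSdef
  have hliS : ∀ i, IsLeast (S (sm i)) (li i) := fun i => hli i
  have hSmono : ∀ (σ : AlgebraicClosure k ≃ₐ[k] AlgebraicClosure k) c l,
      l ∈ S c → l ∈ S (σ c) := by
    rintro σ c l ⟨h, hh1, hh2⟩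
    refine ⟨extScalars n σ.toAlgHom.toRingHom h, ?_, ?_⟩
    · have hrw : extScalars n σ.toAlgHom.toRingHom h
          * (X - Polynomial.C ((MvPowerSeries.C (σ := Fin n) (R := (AlgebraicClosure k))) (σ c))) ^ l
          = extScalars n σ.toAlgHom.toRingHom
              (h * (X - Polynomial.C ((MvPowerSeries.C (σ := Fin n) (R := (AlgebraicClosure k))) c)) ^ l) := by
        rw [map_mul, map_pow, Oaku.extScalars_X_sub_C]
        rfl
      rw [hrw]
      exact hstab σ _ hh1
    · rw [Oaku.ev_extScalars, Polynomial.eval_map,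
        show σ c = σ.toAlgHom.toRingHom c from rfl, Polynomial.eval₂_at_apply]
      intro h0
      apply hh2
      have h0' : σ (Polynomial.eval c (evAtZero n (AlgebraicClosure k) h)) = 0 := h0
      exact σ.injective (by rw [h0', map_zero])
  have hSeq : ∀ (σ : AlgebraicClosure k ≃ₐ[k] AlgebraicClosure k) c, S (σ c) = S c := by
    intro σ c
    apply Set.Subset.antisymm
    · intro l hl
      have := hSmono σ.symm _ l hl
      rwa [σ.symm_apply_apply] at this
    · exact fun l hl => hSmono σ c l hl
  have hPmapσ : ∀ σ : AlgebraicClosure k ≃ₐ[k] AlgebraicClosure k,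
      P.map σ.toAlgHom.toRingHom = P := by
    intro σ
    choose π hπ using hπex σ
    have hinj : Function.Injective π := by
      intro i j hij
      apply hsm
      apply σ.injective
      rw [← hπ i, ← hπ j, hij]
    have hbij : Function.Bijective π := Finite.injective_iff_bijective.mp hinj
    have hl_eq : ∀ i, li (π i) = li i := by
      intro i
      have h1 : IsLeast (S (sm (π i))) (li (π i)) := hliS _
      have h2 : IsLeast (S (sm (π i))) (li i) := by
        rw [hπ i, hSeq σ (sm i)]
        exact hliS i
      exact h1.unique h2
    rw [hPdef, Polynomial.map_prod]
    simp only [Polynomial.map_pow, Polynomial.map_sub, Polynomial.map_X, Polynomial.map_C]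
    calc ∏ i, ((X : Polynomial (AlgebraicClosure k)) - C (σ.toAlgHom.toRingHom (sm i))) ^ li i
        = ∏ i, ((X : Polynomial (AlgebraicClosure k)) - C (sm (π i))) ^ li (π i) :=
          Finset.prod_congr rfl fun i _ => by rw [hπ i, hl_eq i]; rfl
      _ = ∏ i, ((X : Polynomial (AlgebraicClosure k)) - C (sm i)) ^ li i :=
          Function.Bijective.prod_comp hbij (fun j => ((X : Polynomial (AlgebraicClosure k)) - C (sm j)) ^ li j)
  have hPcoeff : ∀ j : ℕ, P.coeff j ∈ f.range := by
    intro j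
    apply Oaku.fixed_mem_range
    intro σ
    have h1 : (P.map σ.toAlgHom.toRingHom).coeff j = σ (P.coeff j) := Polynomial.coeff_map _ _
    rw [← h1, hPmapσ σ]
  -- lift P to k
  have hlift : ∃ p₀ : Polynomial k, p₀.map f = P := by
    rw [← Polynomial.mem_lifts, Polynomial.lifts_iff_coeff_lifts]
    intro j
    obtain ⟨a, ha⟩ := hPcoeff j
    exact ⟨a, ha⟩
  obtain ⟨p₀, hp₀⟩ := hlift
  have hp₀J : toRS n k p₀ ∈ J := by
    apply Oaku.descent (K := AlgebraicClosure k) J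
    rw [Oaku.extScalars_toRS, hp₀, ← hJbar]
    exact hPJ
  have hbdvd : b ∣ p₀ := by
    have hmem : p₀ ∈ Ideal.comap (toRS n k) J := hp₀J
    rw [hb, Ideal.mem_span_singleton] at hmem
    exact hmem
  have hbP : b.map f ∣ P := by
    rw [← hp₀]
    exact Polynomial.map_dvd f hbdvd
  have hPb : P ∣ b.map f := by
    have hmem : b.map f ∈ Ideal.span {P} := by
      rw [← hcomap]
      exact hbbar
    exact Ideal.mem_span_singleton.mp hmem
  have hPmonic : P.Monic := Polynomial.monic_prod_of_monic _ _
    fun i _ => (Polynomial.monic_X_sub_C _).pow _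
  have heq : b.map f = P := Polynomial.eq_of_monic_of_associated (hbMonic.map f) hPmonic
    (associated_of_dvd_dvd hbP hPb)
  exact ⟨heq, hPcoeff, hcomap⟩
end
end

section
/- Unit lemma in k[[x]][s] (key step in the proof of the Proposition of Section 4). Let k be a field, n ≥ 1, and let E be an ideal of k[[x]][s] which contains a monic polynomial b ∈ k[s] and contains an element e such that e(0,s) = 1 (i.e., applying the constant-term map k[[x]] → k to every coefficient of e yields the constant polynomial 1). Then 1 ∈ E, i.e. E = k[[x]][s]. -/
/-
Unit lemma in k[[x]][s] (key step in the proof of the Proposition of Section 4).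
-/

open Classical

noncomputable section

/-- Unit lemma in k[[x]][s]: an ideal E of k[[x]][s] containing a monic polynomial
b ∈ k[s] and an element e with e(0, s) = 1 is the whole ring. -/
theorem unit_lemma
    (n : ℕ) (hn : 0 < n) (k : Type) [Field k]
    (E : Ideal (RS n k))
    (b : Polynomial k) (hb : b.Monic) (hbE : toRS n k b ∈ E)
    (e : RS n k) (heE : e ∈ E) (he : evAtZero n k e = 1) :
    E = ⊤ := by
  by_contra hE
  obtain ⟨M, hM, hEM⟩ := Ideal.exists_le_maximal E hE
  haveI := hM
  letI : Field (RS n k ⧸ M) := Ideal.Quotient.field M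
  set ψ : RS n k →+* (RS n k ⧸ M) := Ideal.Quotient.mk M with hψdef
  set φ : MvPowerSeries (Fin n) k →+* (RS n k ⧸ M) :=
    ψ.comp (Polynomial.C : MvPowerSeries (Fin n) k →+* RS n k) with hφdef
  set t : RS n k ⧸ M := ψ Polynomial.X with htdef
  -- the quotient map is evaluation via φ at t
  have key : ∀ g : RS n k, ψ g = Polynomial.eval₂ φ t g := by
    intro g
    induction g using Polynomial.induction_on' with
    | add p q hp hq => rw [map_add, hp, hq, Polynomial.eval₂_add]
    | monomial i a =>
        rw [Polynomial.eval₂_monomial, hφdef, RingHom.comp_apply, htdef,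
          ← map_pow, ← map_mul, ← Polynomial.C_mul_X_pow_eq_monomial]
  -- set up the quotient of k[[x]] by ker φ, an algebra over which F is integral
  set P : Ideal (MvPowerSeries (Fin n) k) := RingHom.ker φ with hPdef
  letI : Algebra (MvPowerSeries (Fin n) k ⧸ P) (RS n k ⧸ M) :=
    (RingHom.kerLift φ).toAlgebra
  have halg : (algebraMap (MvPowerSeries (Fin n) k ⧸ P) (RS n k ⧸ M)).comp
      (Ideal.Quotient.mk P) = φ := by
    ext x
    exact RingHom.kerLift_mk φ x
  -- t is integral over the quotient
  have ht : IsIntegral (MvPowerSeries (Fin n) k ⧸ P) t := by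
    refine ⟨(toRS n k b).map (Ideal.Quotient.mk P), (hb.map _).map _, ?_⟩
    rw [Polynomial.eval₂_map, halg, ← key]
    exact Ideal.Quotient.eq_zero_iff_mem.2 (hEM hbE)
  -- every element of F is integral
  haveI : Algebra.IsIntegral (MvPowerSeries (Fin n) k ⧸ P) (RS n k ⧸ M) := by
    constructor
    intro x
    obtain ⟨g, rfl⟩ := Ideal.Quotient.mk_surjective x
    refine IsIntegral.of_mem_of_fg _ ht.fg_adjoin_singleton _ ?_
    have : (Ideal.Quotient.mk M : RS n k →+* RS n k ⧸ M) g =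
        Polynomial.aeval t (g.map (Ideal.Quotient.mk P)) := by
      rw [Polynomial.aeval_def, Polynomial.eval₂_map, halg, ← key]
    rw [this]
    exact Polynomial.aeval_mem_adjoin_singleton _ _
  -- hence the quotient of k[[x]] is a field, so ker φ is the maximal ideal
  have hfield : IsField (MvPowerSeries (Fin n) k ⧸ P) :=
    isField_of_isIntegral_of_isField (RingHom.kerLift_injective φ)
      (Field.toIsField _)
  have hPmax : P.IsMaximal := Ideal.Quotient.maximal_of_isField _ hfield
  have hPeq : P = IsLocalRing.maximalIdeal (MvPowerSeries (Fin n) k) :=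
    IsLocalRing.eq_maximalIdeal hPmax
  -- so φ kills every power series with zero constant term
  have hker : ∀ f : MvPowerSeries (Fin n) k,
      (MvPowerSeries.constantCoeff : MvPowerSeries (Fin n) k →+* k) f = 0 → φ f = 0 := by
    intro f hf
    have : f ∈ P := by
      rw [hPeq, IsLocalRing.mem_maximalIdeal, mem_nonunits_iff,
        MvPowerSeries.isUnit_iff_constantCoeff, hf]
      exact not_isUnit_zero
    exact this
  -- φ factors through the constant coefficient map
  set χ : k →+* (RS n k ⧸ M) := φ.comp ((MvPowerSeries.C : k →+* MvPowerSeries (Fin n) k)) with hχdef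
  have hfac : φ = χ.comp ((MvPowerSeries.constantCoeff : MvPowerSeries (Fin n) k →+* k)) := by
    ext f
    have : φ (f - (MvPowerSeries.C : k →+* MvPowerSeries (Fin n) k)
        ((MvPowerSeries.constantCoeff : MvPowerSeries (Fin n) k →+* k) f)) = 0 := by
      apply hker
      simp
    rw [map_sub, sub_eq_zero] at this
    simpa [hχdef] using this
  -- conclude: ψ e = 1 but e ∈ M
  have h1 : ψ e = 1 := by
    rw [key, hfac, ← Polynomial.eval₂_map]
    have : e.map ((MvPowerSeries.constantCoeff : MvPowerSeries (Fin n) k →+* k)) = evAtZero n k e := rfl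
    rw [this, he, Polynomial.eval₂_one]
  have h0 : ψ e = 0 := Ideal.Quotient.eq_zero_iff_mem.2 (hEM heE)
  rw [h0] at h1
  exact zero_ne_one h1

end
end

section
/- Extension–contraction for the ideal of polynomials in s. Let k be a field of characteristic 0 with algebraic closure k̄, n ≥ 1, and let J be an ideal of k[[x]][s] with J ∩ k[s] ≠ (0); let b ∈ k[s] be the monic generator of J ∩ k[s]. Let J̄ be the ideal of k̄[[x]][s] generated by the image of J. Then J̄ ∩ k̄[s] = b·k̄[s]; that is, the monic generator of J̄ ∩ k̄[s] is the image of the monic generator of J ∩ k[s]. -/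
/-
Extension–contraction for the ideal of polynomials in s.
-/

open Classical Polynomial

noncomputable section

namespace ExtContAux

variable {n : ℕ} {k K : Type} [Field k] [Field K] [Algebra k K]

/-- Coefficientwise application of a `k`-linear functional to multivariate power series. -/
def Lps (l : Module.Dual k K) : MvPowerSeries (Fin n) K →+ MvPowerSeries (Fin n) k where
  toFun φ := fun d => l (MvPowerSeries.coeff d φ)
  map_zero' := by funext d; simp only [map_zero]; rfl
  map_add' φ ψ := by funext d; simp only [map_add]; rfl

lemma coeff_Lps (l : Module.Dual k K) (φ : MvPowerSeries (Fin n) K) (d : (Fin n) →₀ ℕ) :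
    MvPowerSeries.coeff d (Lps l φ) = l (MvPowerSeries.coeff d φ) := rfl

lemma Lps_mul_map (l : Module.Dual k K) (φ : MvPowerSeries (Fin n) K)
    (g : MvPowerSeries (Fin n) k) :
    Lps l (φ * MvPowerSeries.map (algebraMap k K) g) = Lps l φ * g := by
  apply MvPowerSeries.ext; intro d
  rw [coeff_Lps, MvPowerSeries.coeff_mul, MvPowerSeries.coeff_mul, map_sum]
  refine Finset.sum_congr rfl fun p _ => ?_
  rw [coeff_Lps, MvPowerSeries.coeff_map, mul_comm _ ((algebraMap k K) _),
    ← Algebra.smul_def, map_smul, smul_eq_mul, mul_comm]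

lemma Lps_C (l : Module.Dual k K) (a : K) :
    Lps (n := n) l (MvPowerSeries.C (σ := Fin n) a) = MvPowerSeries.C (σ := Fin n) (l a) := by
  apply MvPowerSeries.ext; intro d
  rw [coeff_Lps, MvPowerSeries.coeff_C, MvPowerSeries.coeff_C]
  split <;> simp

/-- Coefficientwise application of an additive map to polynomials. -/
def Lpoly {M N : Type} [Semiring M] [Semiring N] (f : M →+ N) : Polynomial M →+ Polynomial N where
  toFun p := ⟨.ofCoeff (Finsupp.mapRange f (map_zero f) p.toFinsupp.coeff)⟩
  map_zero' := by simp
  map_add' p q := by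
    have h : Finsupp.mapRange ⇑f (map_zero f) (p.toFinsupp + q.toFinsupp).coeff
        = Finsupp.mapRange ⇑f (map_zero f) p.toFinsupp.coeff
          + Finsupp.mapRange ⇑f (map_zero f) q.toFinsupp.coeff :=
      Finsupp.mapRange_add (map_add f) _ _
    simp only [Polynomial.toFinsupp_add, h, AddMonoidAlgebra.ofCoeff_add]
    exact Polynomial.ofFinsupp_add

lemma coeff_Lpoly {M N : Type} [Semiring M] [Semiring N] (f : M →+ N) (p : Polynomial M)
    (i : ℕ) : (Lpoly f p).coeff i = f (p.coeff i) := by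
  show Polynomial.coeff ⟨.ofCoeff (Finsupp.mapRange f (map_zero f) p.toFinsupp.coeff)⟩ i = f (p.coeff i)
  rw [Polynomial.coeff_ofFinsupp, AddMonoidAlgebra.coeff_ofCoeff, Finsupp.mapRange_apply]
  rfl

lemma L_mul_ext (l : Module.Dual k K) (c : RS n K) (f : RS n k) :
    Lpoly (Lps l) (c * extScalars n (algebraMap k K) f) = Lpoly (Lps l) c * f := by
  apply Polynomial.ext; intro i
  rw [coeff_Lpoly, Polynomial.coeff_mul, Polynomial.coeff_mul, map_sum (Lps l)]
  refine Finset.sum_congr rfl fun p _ => ?_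
  have h : (extScalars n (algebraMap k K) f).coeff p.2
      = MvPowerSeries.map (algebraMap k K) (f.coeff p.2) := by
    simp [extScalars, Polynomial.coeff_map]
  rw [h, Lps_mul_map, coeff_Lpoly]

lemma L_toRS (l : Module.Dual k K) (p : Polynomial K) :
    Lpoly (Lps (n := n) l) (toRS n K p) = toRS n k (Lpoly l.toAddMonoidHom p) := by
  apply Polynomial.ext; intro i
  rw [coeff_Lpoly]
  simp only [toRS, Polynomial.coe_mapRingHom, Polynomial.coeff_map]
  rw [Lps_C, coeff_Lpoly]
  rfl

lemma extScalars_toRS (p : Polynomial k) :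
    extScalars n (algebraMap k K) (toRS n k p) = toRS n K (p.map (algebraMap k K)) := by
  apply Polynomial.ext; intro i
  simp [extScalars, toRS, Polynomial.coeff_map, MvPowerSeries.map_C]

lemma L_mem (l : Module.Dual k K) (J : Ideal (RS n k)) {y : RS n K}
    (hy : y ∈ Ideal.map (extScalars n (algebraMap k K)) J) (c : RS n K) :
    Lpoly (Lps l) (c * y) ∈ J := by
  have hy' : y ∈ Submodule.span (RS n K) ((extScalars n (algebraMap k K)) '' J) := hy
  refine Submodule.span_induction
    (p := fun y _ => ∀ c : RS n K, Lpoly (Lps l) (c * y) ∈ J) ?_ ?_ ?_ ?_ hy' c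
  · rintro _ ⟨f, hf, rfl⟩ c
    rw [L_mul_ext]
    exact Ideal.mul_mem_left J _ hf
  · intro c; simp
  · intro x y _ _ ihx ihy c
    rw [mul_add, map_add]
    exact J.add_mem (ihx c) (ihy c)
  · intro a x _ ih c
    rw [smul_eq_mul, ← mul_assoc]
    exact ih (c * a)

end ExtContAux

open ExtContAux

/-- Extension–contraction for the ideal of polynomials in s: if b is the monic
generator of J ∩ k[s] ≠ (0) and J̄ is the ideal of k̄[[x]][s] generated by J, then
J̄ ∩ k̄[s] is generated by the image of b in k̄[s]. -/
theorem extension_contraction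
    (n : ℕ) (hn : 0 < n) (k : Type) [Field k] [CharZero k]
    (J : Ideal (RS n k))
    (hJne : Ideal.comap (toRS n k) J ≠ ⊥)
    (b : Polynomial k) (hbMonic : b.Monic)
    (hb : Ideal.comap (toRS n k) J = Ideal.span {b}) :
    Ideal.comap (toRS n (AlgebraicClosure k))
        (Ideal.map (extScalars n (algebraMap k (AlgebraicClosure k))) J)
      = Ideal.span {Polynomial.map (algebraMap k (AlgebraicClosure k)) b} := by
  set K := AlgebraicClosure k
  set alg := algebraMap k K with halg
  set Jbar := Ideal.map (extScalars n alg) J with hJbar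
  have hbmem : toRS n k b ∈ J := by
    have : b ∈ Ideal.comap (toRS n k) J := hb ▸ Ideal.mem_span_singleton_self b
    exact this
  have hbbar : toRS n K (b.map alg) ∈ Jbar := by
    rw [← extScalars_toRS]
    exact Ideal.mem_map_of_mem _ hbmem
  have hbM : (b.map alg).Monic := hbMonic.map alg
  apply le_antisymm
  · intro p hp
    rw [Ideal.mem_comap] at hp
    set r := p %ₘ (b.map alg) with hrdef
    have hrJ : toRS n K r ∈ Jbar := by
      have hreq : r = p - (b.map alg) * (p /ₘ (b.map alg)) := by
        rw [hrdef, eq_sub_iff_add_eq, Polynomial.modByMonic_add_div p (b.map alg)]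
      rw [hreq, map_sub, map_mul]
      exact Ideal.sub_mem _ hp (Ideal.mul_mem_right _ _ hbbar)
    have hdeg : r.degree < b.degree := by
      have h := Polynomial.degree_modByMonic_lt p hbM
      rwa [Polynomial.degree_map_eq_of_injective (algebraMap k K).injective] at h
    have hr0 : r = 0 := by
      apply Polynomial.ext; intro i
      rw [Polynomial.coeff_zero, ← Module.forall_dual_apply_eq_zero_iff k (r.coeff i)]
      intro l
      have h1 : Lpoly (Lps l) (toRS n K r) ∈ J := by
        have h := L_mem l J hrJ 1
        rwa [one_mul] at h
      rw [L_toRS] at h1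
      have h2 : b ∣ Lpoly l.toAddMonoidHom r := by
        have : Lpoly l.toAddMonoidHom r ∈ Ideal.comap (toRS n k) J := h1
        rwa [hb, Ideal.mem_span_singleton] at this
      have hdeg2 : (Lpoly l.toAddMonoidHom r).degree < b.degree := by
        refine lt_of_le_of_lt ?_ hdeg
        rw [Polynomial.degree_le_iff_coeff_zero]
        intro m hm
        rw [coeff_Lpoly, Polynomial.coeff_eq_zero_of_degree_lt hm, map_zero]
      have h0 := Polynomial.eq_zero_of_dvd_of_degree_lt h2 hdeg2
      have h3 := congrArg (fun q => Polynomial.coeff q i) h0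
      simpa [coeff_Lpoly] using h3
    have hdvd : (b.map alg) ∣ p := by
      rw [← Polynomial.modByMonic_eq_zero_iff_dvd hbM]
      exact hr0
    exact Ideal.mem_span_singleton.mpr hdvd
  · rw [Ideal.span_le]
    intro x hx
    rw [Set.mem_singleton_iff] at hx
    subst hx
    exact hbbar
end
end

section
/- Rationality lemma (algebraic form of Lemme 5.3). Let m ≥ 1, let Q be a prime ideal of ℂ[y_1,…,y_m], and let V(Q) = {y ∈ ℂ^m : g(y) = 0 for all g ∈ Q}. Let p = Σ_{i=0}^N c_i·s^i ∈ ℂ[y][s] with c_N ≠ 0 (c_i ∈ ℂ[y]). Suppose there exists g₀ ∈ ℂ[y] \ Q such that for every y ∈ V(Q) with g₀(y) ≠ 0 one has c_N(y) ≠ 0 and, for every i = 0,…,N, the ratio c_i(y)/c_N(y) is a rational number (equivalently, the normalized polynomial Σ_i (c_i(y)/c_N(y)) s^i lies in ℚ[s]). Then there exists a monic polynomial q ∈ ℚ[s] of degree N such that every coefficient of p − c_N·q, viewed as a polynomial in s with coefficients in ℂ[y], belongs to Q. -/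
/-
Rationality lemma (algebraic form of Lemme 5.3).
-/

open Classical

noncomputable section

open Cardinal in
/-- Counting auxiliary: a transcendental `τ` cannot have all `(τ - lam)⁻¹`, for irrational
`lam`, inside the span of countably many elements. -/
theorem rationality_lemma_count {E : Type} [Field E] [Algebra ℂ E] {ι : Type} [Countable ι]
    (τ : E) (f : ι → E) (htrans : Transcendental ℂ τ)
    (hmem : ∀ lam : ℂ, lam ∉ Set.range ((↑) : ℚ → ℂ) →
      (τ - algebraMap ℂ E lam)⁻¹ ∈ Submodule.span ℂ (Set.range f)) : False := by
  have li : LinearIndependent ℂ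
      (fun a : ((Set.range ((↑) : ℚ → ℂ))ᶜ : Set ℂ) => (τ - algebraMap ℂ E (a : ℂ))⁻¹) :=
    htrans.linearIndependent_sub_inv.comp _ Subtype.val_injective
  have liF : LinearIndependent ℂ
      (fun a : ((Set.range ((↑) : ℚ → ℂ))ᶜ : Set ℂ) =>
        (⟨(τ - algebraMap ℂ E (a : ℂ))⁻¹, hmem a a.2⟩ : Submodule.span ℂ (Set.range f))) := by
    refine LinearIndependent.of_comp (Submodule.span ℂ (Set.range f)).subtype ?_
    exact li
  have hcard : #((Set.range ((↑) : ℚ → ℂ))ᶜ : Set ℂ)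
      ≤ Module.rank ℂ (Submodule.span ℂ (Set.range f)) := liF.cardinal_le_rank
  have hrank : Module.rank ℂ (Submodule.span ℂ (Set.range f)) ≤ Cardinal.aleph0 :=
    (rank_span_le _).trans ((Cardinal.mk_range_le).trans (Cardinal.mk_le_aleph0))
  have hScount : ((Set.range ((↑) : ℚ → ℂ))ᶜ : Set ℂ).Countable := by
    rw [← Set.countable_coe_iff]
    exact Cardinal.mk_le_aleph0_iff.mp (hcard.trans hrank)
  have huniv : (Set.univ : Set ℂ).Countable := by
    have hu : (Set.range ((↑) : ℚ → ℂ)) ∪ (Set.range ((↑) : ℚ → ℂ))ᶜ = Set.univ :=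
      Set.union_compl_self _
    rw [← hu]
    exact (Set.countable_range _).union hScount
  have : Countable ℂ := Set.countable_univ_iff.mp huniv
  have : Countable ℝ := Complex.ofReal_injective.countable
  exact Cardinal.not_countable_real Set.countable_univ

set_option maxHeartbeats 1000000 in
set_option synthInstance.maxHeartbeats 400000 in
open MvPolynomial Cardinal in
/-- Auxiliary: each ratio is a complex constant modulo `Q`, and that constant is rational. -/
theorem rationality_lemma_aux
    (m : ℕ)
    (Q : Ideal (MvPolynomial (Fin m) ℂ)) (hQ : Q.IsPrime)
    (N : ℕ) (c : Fin (N + 1) → MvPolynomial (Fin m) ℂ)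
    (g0 : MvPolynomial (Fin m) ℂ) (hg0 : g0 ∉ Q)
    (hrat : ∀ y : Fin m → ℂ,
      (∀ g ∈ Q, MvPolynomial.eval y g = 0) →
      MvPolynomial.eval y g0 ≠ 0 →
      MvPolynomial.eval y (c (Fin.last N)) ≠ 0 ∧
      ∀ i : Fin (N + 1), ∃ r : ℚ,
        MvPolynomial.eval y (c i) = (r : ℂ) * MvPolynomial.eval y (c (Fin.last N)))
    (i : Fin (N + 1)) :
    ∃ r : ℚ, c i - MvPolynomial.C (r : ℂ) * c (Fin.last N) ∈ Q := by
  haveI := hQ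
  haveI htower : IsScalarTower ℂ (MvPolynomial (Fin m) ℂ ⧸ Q)
      (FractionRing (MvPolynomial (Fin m) ℂ ⧸ Q)) := inferInstance
  set θ : MvPolynomial (Fin m) ℂ →+* FractionRing (MvPolynomial (Fin m) ℂ ⧸ Q) :=
    (algebraMap (MvPolynomial (Fin m) ℂ ⧸ Q) (FractionRing (MvPolynomial (Fin m) ℂ ⧸ Q))).comp
      (Ideal.Quotient.mk Q) with hθ
  have hker : ∀ r : MvPolynomial (Fin m) ℂ, θ r = 0 ↔ r ∈ Q := by
    intro r
    rw [hθ, RingHom.comp_apply, IsFractionRing.to_map_eq_zero_iff,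
      Ideal.Quotient.eq_zero_iff_mem]
  have halgC : ∀ a : ℂ, θ (MvPolynomial.C a)
      = algebraMap ℂ (FractionRing (MvPolynomial (Fin m) ℂ ⧸ Q)) a := by
    intro a
    have h1 : (Ideal.Quotient.mk Q) (MvPolynomial.C a)
        = algebraMap ℂ (MvPolynomial (Fin m) ℂ ⧸ Q) a := rfl
    rw [hθ, RingHom.comp_apply, h1, ← IsScalarTower.algebraMap_apply]
  -- the witness point y₀
  have hQvan : vanishingIdeal ℂ (zeroLocus ℂ Q) = Q := IsPrime.vanishingIdeal_zeroLocus (K := ℂ) Q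
  have hy0 : ∃ y₀ ∈ zeroLocus ℂ Q, MvPolynomial.eval y₀ g0 ≠ 0 := by
    by_contra h
    push_neg at h
    exact hg0 (hQvan ▸ mem_vanishingIdeal_iff.mpr fun x hx => h x hx)
  obtain ⟨y₀, hy₀Q, hy₀g0⟩ := hy0
  have hy₀Q' : ∀ g ∈ Q, MvPolynomial.eval y₀ g = 0 := mem_zeroLocus_iff.mp hy₀Q
  obtain ⟨hy₀cN, hy₀rat⟩ := hrat y₀ hy₀Q' hy₀g0
  have hcNQ : c (Fin.last N) ∉ Q := fun h => hy₀cN (hy₀Q' _ h)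
  have hgQ : g0 * c (Fin.last N) ∉ Q := fun h => (hQ.mem_or_mem h).elim hg0 hcNQ
  have hθg : θ (g0 * c (Fin.last N)) ≠ 0 := fun h => hgQ ((hker _).mp h)
  have hθcN : θ (c (Fin.last N)) ≠ 0 := fun h => hcNQ ((hker _).mp h)
  -- reduce rationality to complex constancy
  suffices hconst : ∃ lam : ℂ, c i - MvPolynomial.C lam * c (Fin.last N) ∈ Q by
    obtain ⟨lam, hlam⟩ := hconst
    obtain ⟨r, hr⟩ := hy₀rat i
    have he : MvPolynomial.eval y₀ (c i) - lam * MvPolynomial.eval y₀ (c (Fin.last N)) = 0 := by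
      have := hy₀Q' _ hlam
      simpa using this
    have hlr : lam = (r : ℂ) := by
      refine mul_right_cancel₀ hy₀cN ?_
      rw [← sub_eq_zero.mp he]
      exact hr
    exact ⟨r, hlr ▸ hlam⟩
  set τ : FractionRing (MvPolynomial (Fin m) ℂ ⧸ Q) :=
    θ (c i) / θ (c (Fin.last N)) with hτ
  have hτmul : τ * θ (c (Fin.last N)) = θ (c i) := div_mul_cancel₀ _ hθcN
  by_cases halg : IsAlgebraic ℂ τ
  · -- algebraic case: τ is a complex constant
    obtain ⟨lam, hlam⟩ := minpoly.mem_range_of_degree_eq_one ℂ τ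
      (IsAlgClosed.degree_eq_one_of_irreducible ℂ (minpoly.irreducible halg.isIntegral))
    refine ⟨lam, (hker _).mp ?_⟩
    rw [map_sub, map_mul, halgC, hlam, ← hτmul]
    ring
  · -- transcendental case: contradiction with uncountability of ℂ
    exfalso
    have htrans : Transcendental ℂ τ := halg
    -- the countably-generated subspace W
    set f : ((Fin m →₀ ℕ) × ℕ) → FractionRing (MvPolynomial (Fin m) ℂ ⧸ Q) :=
      fun p => θ (MvPolynomial.monomial p.1 1) * (θ (g0 * c (Fin.last N)))⁻¹ ^ p.2 with hf
    have hWmem : ∀ (r : MvPolynomial (Fin m) ℂ) (k : ℕ),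
        θ r * (θ (g0 * c (Fin.last N)))⁻¹ ^ k ∈ Submodule.span ℂ (Set.range f) := by
      intro r k
      have hsum : θ r
          = ∑ d ∈ r.support, (MvPolynomial.coeff d r) • θ (MvPolynomial.monomial d 1) := by
        conv_lhs => rw [r.as_sum]
        rw [map_sum]
        refine Finset.sum_congr rfl fun d _ => ?_
        have h2 : (MvPolynomial.monomial d) (MvPolynomial.coeff d r)
            = MvPolynomial.C (MvPolynomial.coeff d r) * (MvPolynomial.monomial d) 1 := by
          rw [MvPolynomial.C_mul_monomial, mul_one]
        rw [h2, map_mul, halgC]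
        exact (Algebra.smul_def _ _).symm
      rw [hsum, Finset.sum_mul]
      refine Submodule.sum_mem _ fun d _ => ?_
      rw [smul_mul_assoc]
      exact Submodule.smul_mem _ _ (Submodule.subset_span ⟨(d, k), rfl⟩)
    -- inverses lie in W
    have hmemW : ∀ lam : ℂ, lam ∉ Set.range ((↑) : ℚ → ℂ) →
        (τ - algebraMap ℂ (FractionRing (MvPolynomial (Fin m) ℂ ⧸ Q)) lam)⁻¹
          ∈ Submodule.span ℂ (Set.range f) := by
      intro lam hlam
      have hrad : g0 * c (Fin.last N)
          ∈ (Q ⊔ Ideal.span {c i - MvPolynomial.C lam * c (Fin.last N)}).radical := by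
        rw [← vanishingIdeal_zeroLocus_eq_radical (K := ℂ)]
        refine mem_vanishingIdeal_iff.mpr fun y hy => ?_
        have hyQ : ∀ p ∈ Q, MvPolynomial.eval y p = 0 := fun p hp =>
          mem_zeroLocus_iff.mp hy p (Ideal.mem_sup_left hp)
        have hyd : MvPolynomial.eval y (c i - MvPolynomial.C lam * c (Fin.last N)) = 0 :=
          mem_zeroLocus_iff.mp hy _ (Ideal.mem_sup_right (Ideal.subset_span rfl))
        by_contra hyg
        simp only [map_mul, mul_eq_zero, not_or] at hyg
        obtain ⟨hycN, hyrat⟩ := hrat y hyQ hyg.1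
        obtain ⟨r, hr⟩ := hyrat i
        simp only [map_sub, map_mul, MvPolynomial.eval_C] at hyd
        refine hlam ⟨r, ?_⟩
        refine (mul_right_cancel₀ hycN ?_).symm
        rw [← sub_eq_zero.mp hyd]
        exact hr
      obtain ⟨k, hk⟩ := Ideal.mem_radical_iff.mp hrad
      obtain ⟨q, hq, z, hz, hqz⟩ := Submodule.mem_sup.mp hk
      obtain ⟨h, hh⟩ := Ideal.mem_span_singleton'.mp hz
      -- in K : θ g ^ k = θ h * θ d
      have hθq : θ q = 0 := (hker q).mpr hq
      have hgk : θ (g0 * c (Fin.last N)) ^ k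
          = θ h * θ (c i - MvPolynomial.C lam * c (Fin.last N)) := by
        rw [← map_pow, ← hqz, map_add, hθq, zero_add, ← hh, map_mul]
      have hθd : θ (c i - MvPolynomial.C lam * c (Fin.last N))
          = (τ - algebraMap ℂ (FractionRing (MvPolynomial (Fin m) ℂ ⧸ Q)) lam)
            * θ (c (Fin.last N)) := by
        rw [map_sub, map_mul, halgC, sub_mul, hτmul]
      have h1 : (τ - algebraMap ℂ (FractionRing (MvPolynomial (Fin m) ℂ ⧸ Q)) lam)
          * (θ (c (Fin.last N)) * θ h) = θ (g0 * c (Fin.last N)) ^ k := by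
        rw [hgk, hθd]; ring
      have hinv : (τ - algebraMap ℂ (FractionRing (MvPolynomial (Fin m) ℂ ⧸ Q)) lam)⁻¹
          = θ (c (Fin.last N) * h) * (θ (g0 * c (Fin.last N)))⁻¹ ^ k := by
        refine inv_eq_of_mul_eq_one_right ?_
        rw [map_mul, inv_pow, ← mul_assoc, h1, mul_inv_cancel₀ (pow_ne_zero _ hθg)]
      rw [hinv]
      exact hWmem _ k
    exact rationality_lemma_count τ f htrans hmemW

open MvPolynomial in
/-- Rationality lemma: let Q be a prime ideal of ℂ[y_1, …, y_m] and
p = Σ_{i=0}^N c_i s^i with c_N ≠ 0.  If on a nonempty Zariski-open part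
{g₀ ≠ 0} of V(Q) the normalized polynomial Σ_i (c_i(y)/c_N(y)) s^i always lies in
ℚ[s], then there is a monic q ∈ ℚ[s] of degree N with p − c_N·q ∈ Q[s], i.e. all
coefficients c_i − q_i c_N lie in Q. -/
theorem rationality_lemma
    (m : ℕ) (hm : 0 < m)
    (Q : Ideal (MvPolynomial (Fin m) ℂ)) (hQ : Q.IsPrime)
    (N : ℕ) (c : Fin (N + 1) → MvPolynomial (Fin m) ℂ)
    (hcN : c (Fin.last N) ≠ 0)
    (g0 : MvPolynomial (Fin m) ℂ) (hg0 : g0 ∉ Q)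
    (hrat : ∀ y : Fin m → ℂ,
      (∀ g ∈ Q, MvPolynomial.eval y g = 0) →
      MvPolynomial.eval y g0 ≠ 0 →
      MvPolynomial.eval y (c (Fin.last N)) ≠ 0 ∧
      ∀ i : Fin (N + 1), ∃ r : ℚ,
        MvPolynomial.eval y (c i) = (r : ℂ) * MvPolynomial.eval y (c (Fin.last N))) :
    ∃ qq : Fin (N + 1) → ℚ, qq (Fin.last N) = 1 ∧
      ∀ i : Fin (N + 1), c i - MvPolynomial.C (qq i : ℂ) * c (Fin.last N) ∈ Q := by
  have key := rationality_lemma_aux m Q hQ N c g0 hg0 hrat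
  refine ⟨fun i => (key i).choose, ?_, fun i => (key i).choose_spec⟩
  -- the witness point again, to show the last coefficient is 1
  haveI := hQ
  have hQvan : vanishingIdeal ℂ (zeroLocus ℂ Q) = Q := IsPrime.vanishingIdeal_zeroLocus (K := ℂ) Q
  have hy0 : ∃ y₀ ∈ zeroLocus ℂ Q, MvPolynomial.eval y₀ g0 ≠ 0 := by
    by_contra h
    push_neg at h
    exact hg0 (hQvan ▸ mem_vanishingIdeal_iff.mpr fun x hx => h x hx)
  obtain ⟨y₀, hy₀Q, hy₀g0⟩ := hy0
  have hy₀Q' : ∀ g ∈ Q, MvPolynomial.eval y₀ g = 0 := mem_zeroLocus_iff.mp hy₀Q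
  obtain ⟨hy₀cN, -⟩ := hrat y₀ hy₀Q' hy₀g0
  have hmem := (key (Fin.last N)).choose_spec
  have he : MvPolynomial.eval y₀ (c (Fin.last N))
      - ((key (Fin.last N)).choose : ℂ) * MvPolynomial.eval y₀ (c (Fin.last N)) = 0 := by
    have := hy₀Q' _ hmem
    simpa using this
  have h1 : (((key (Fin.last N)).choose : ℚ) : ℂ) = 1 := by
    refine mul_right_cancel₀ hy₀cN ?_
    rw [one_mul, ← sub_eq_zero.mp he]
  exact_mod_cast h1
end
end
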